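/- arXiv:0902.0440 — 4 statements merged into one kernel-verified Lean document; each statement's English description precedes it below -/
import Mathlib

section
/- Assume λ = λ^{<λ} < cf(θ), χ ≤ 2^λ, and χ → [θ]²_{2κ,2}. Then for every ordinal γ < λ⁺, χ → (γ)²_κ holds, i.e. every coloring c : [χ]² → κ has a homogeneous set of order type γ. -/
open Cardinal

/-- `λ → (ξ;ξ)²_κ`: for every coloring `c` of pairs of ordinals below `λ` into `κ`
there are `ε < κ` and sequences `⟨α_i, β_i : i < ξ⟩` with `α_i < β_i < α_j < λ` for
`i < j` and `c{α_i, β_j} = ε` for `i ≤ j`. -/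
def ArrowSq (l : Cardinal) (ξ : Ordinal) (κ : Cardinal) : Prop :=
  ∀ c : Ordinal → Ordinal → Ordinal,
    (∀ α β : Ordinal, α < l.ord → β < l.ord → c α β < κ.ord) →
    ∃ ε : Ordinal, ε < κ.ord ∧ ∃ a b : Ordinal → Ordinal,
      (∀ i, i < ξ → a i < b i ∧ b i < l.ord) ∧
      (∀ i j, i < j → j < ξ → b i < a j) ∧
      (∀ i j, i ≤ j → j < ξ → c (a i) (b j) = ε)

/-- `λ → (ξ,(ξ;ξ)_κ)²`: for every coloring of pairs below `λ` into `1+κ` there are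
`ε < 1+κ` and `α_i < β_i < α_j < λ` (for `i < j < ξ`) such that either `ε = 0` and
`c{α_i,α_j} = 0` for `i < j`, or `ε ≥ 1` and `c{α_i,β_j} = ε` for `i ≤ j`. -/
def ArrowMixed (l : Cardinal) (ξ : Ordinal) (κ : Cardinal) : Prop :=
  ∀ c : Ordinal → Ordinal → Ordinal,
    (∀ α β : Ordinal, α < l.ord → β < l.ord → c α β < 1 + κ.ord) →
    ∃ ε : Ordinal, ε < 1 + κ.ord ∧ ∃ a b : Ordinal → Ordinal,
      (∀ i, i < ξ → a i < b i ∧ b i < l.ord) ∧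
      (∀ i j, i < j → j < ξ → b i < a j) ∧
      ((ε = 0 ∧ ∀ i j, i < j → j < ξ → c (a i) (a j) = 0) ∨
       (1 ≤ ε ∧ ∀ i j, i ≤ j → j < ξ → c (a i) (b j) = ε))

/-- `χ → [θ]²_{σ,2}`: every coloring of pairs below `χ` into `σ` admits a subset of
`χ` of order type `θ` (given by a strictly increasing enumeration) on which the
coloring takes at most two values. -/
def SqBr (χ θ σ : Cardinal) : Prop :=
  ∀ d : Ordinal → Ordinal → Ordinal,
    (∀ α β : Ordinal, α < χ.ord → β < χ.ord → d α β < σ.ord) →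
    ∃ f : Ordinal → Ordinal,
      (∀ i, i < θ.ord → f i < χ.ord) ∧
      (∀ i j, i < j → j < θ.ord → f i < f j) ∧
      ∃ v₁ v₂ : Ordinal, ∀ i j, i < j → j < θ.ord →
        d (f i) (f j) = v₁ ∨ d (f i) (f j) = v₂

noncomputable section SqBrAux

namespace SqBrAux

universe u

open Set Order Ordinal

/-! ### Branch combinatorics -/

/-- first difference point of two `Bool`-valued branch functions -/
def Dfn (u v : Ordinal.{u} → Bool) : Ordinal := sInf {δ | u δ ≠ v δ}

/-- the bit of the second branch at the first difference point -/
def Bitf (u v : Ordinal.{u} → Bool) : Bool := v (Dfn u v)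

/-- overwrite a branch at one point -/
def ow (u : Ordinal.{u} → Bool) (δ : Ordinal) (b : Bool) : Ordinal → Bool :=
  fun ξ => if ξ = δ then b else u ξ

/-- big set of ordinals: at least `l⁺` many -/
def Big (l : Cardinal.{u}) (A : Set Ordinal) : Prop :=
  Cardinal.lift.{u+1} (Order.succ l) ≤ #A

/-- the set of indices in `Z` whose branch agrees with `u` below `δ` -/
def node (y : Ordinal → Ordinal → Bool) (Z : Set Ordinal) (δ : Ordinal)
    (u : Ordinal → Bool) : Set Ordinal :=
  {j | j ∈ Z ∧ ∀ ξ, ξ < δ → y j ξ = u ξ}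

/-- indices all of whose nodes are big -/
def prune (l : Cardinal.{u}) (y : Ordinal → Ordinal → Bool) (Z : Set Ordinal) : Set Ordinal :=
  {i | i ∈ Z ∧ ∀ δ, δ < l.ord → Big l (node y Z δ (y i))}

/-- levels where branch `i` has value `!b` and flipping to `b` gives a big node -/
def DSet (l : Cardinal.{u}) (y : Ordinal → Ordinal → Bool) (Z : Set Ordinal)
    (i : Ordinal) (b : Bool) : Set Ordinal :=
  {δ | δ < l.ord ∧ y i δ = !b ∧ Big l (node y Z (δ + 1) (ow (y i) δ b))}

lemma bool_ne_iff {a b : Bool} : a ≠ b ↔ a = !b := by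
  cases a <;> cases b <;> simp

lemma Dfn_comm (u v : Ordinal.{u} → Bool) : Dfn u v = Dfn v u := by
  unfold Dfn
  congr 1
  ext δ
  exact ne_comm

lemma Dfn_spec {u v : Ordinal.{u} → Bool} (h : u ≠ v) : u (Dfn u v) ≠ v (Dfn u v) :=
  csInf_mem (Function.ne_iff.1 h)

lemma Dfn_min {u v : Ordinal.{u} → Bool} {ξ : Ordinal} (h : ξ < Dfn u v) : u ξ = v ξ := by
  by_contra hne
  exact absurd (csInf_le' (show ξ ∈ {δ | u δ ≠ v δ} from hne)) (not_le.2 h)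

lemma Dfn_eq {u v : Ordinal.{u} → Bool} {δ : Ordinal} (h1 : ∀ ξ, ξ < δ → u ξ = v ξ)
    (h2 : u δ ≠ v δ) : Dfn u v = δ := by
  have hne : u ≠ v := Function.ne_iff.2 ⟨δ, h2⟩
  refine le_antisymm (csInf_le' h2) ?_
  by_contra hlt
  push_neg at hlt
  exact Dfn_spec hne (h1 _ hlt)

lemma Bitf_eq {u v : Ordinal.{u} → Bool} {δ : Ordinal} (h1 : ∀ ξ, ξ < δ → u ξ = v ξ)
    (h2 : u δ ≠ v δ) : Bitf u v = v δ := by rw [Bitf, Dfn_eq h1 h2]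

/-! ### Cardinality helpers -/

lemma not_big_le {l : Cardinal.{u}} {A : Set Ordinal} (h : ¬ Big l A) :
    #A ≤ Cardinal.lift.{u+1} l := by
  rw [Big, not_le] at h
  rwa [Cardinal.lift_succ, Order.lt_succ_iff] at h

lemma Big.mono {l : Cardinal.{u}} {A B : Set Ordinal} (h : A ⊆ B) (hA : Big l A) : Big l B :=
  hA.trans (mk_le_mk_of_subset h)

lemma Big.nonempty {l : Cardinal.{u}} {A : Set Ordinal} (hA : Big l A) : A.Nonempty := by
  rw [Set.nonempty_iff_ne_empty]
  rintro rfl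
  rw [Big, mk_emptyCollection, nonpos_iff_eq_zero, lift_eq_zero] at hA
  exact (Order.bot_lt_succ l).ne' (by simpa using hA)

lemma Big.nontrivial {l : Cardinal.{u}} (hl0 : ℵ₀ ≤ l) {A : Set Ordinal} (hA : Big l A) :
    ∃ i ∈ A, ∃ j ∈ A, i ≠ j := by
  have h1 : 1 < #A := by
    refine lt_of_lt_of_le ?_ hA
    exact lt_of_lt_of_le one_lt_aleph0 (aleph0_le_lift.2 (hl0.trans (le_succ l)))
  exact Set.nontrivial_coe_sort.1 (one_lt_iff_nontrivial.1 h1)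

lemma big_of_union {l : Cardinal.{u}} (hl0 : ℵ₀ ≤ l) {Z A B : Set Ordinal} (hsub : Z ⊆ A ∪ B)
    (hZ : Big l Z) : Big l A ∨ Big l B := by
  by_contra hc
  push_neg at hc
  have hA := not_big_le hc.1
  have hB := not_big_le hc.2
  have hZle : #Z ≤ Cardinal.lift.{u+1} l := by
    refine le_trans (mk_le_mk_of_subset hsub) (le_trans (mk_union_le _ _) ?_)
    calc #A + #B ≤ Cardinal.lift.{u+1} l + Cardinal.lift.{u+1} l := add_le_add hA hB
      _ = Cardinal.lift.{u+1} l := add_eq_self (aleph0_le_lift.2 hl0)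
  have := lift_le.1 (hZ.trans hZle)
  exact absurd (Order.succ_le_iff.1 this) (lt_irrefl l)

lemma exists_big_fiber {l : Cardinal.{u}} (hl0 : ℵ₀ ≤ l) (S : Set Ordinal) (hS : Big l S)
    (v : Ordinal → Ordinal) (hv : ∀ i ∈ S, v i < l.ord) :
    ∃ x, x < l.ord ∧ Big l {i | i ∈ S ∧ v i = x} := by
  by_contra hc
  push_neg at hc
  have hall : ∀ x : ↥(Iio l.ord), #{i | i ∈ S ∧ v i = x.1} ≤ Cardinal.lift.{u+1} l :=
    fun x => not_big_le (hc x.1 x.2)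
  have hsub : S ⊆ ⋃ x : ↥(Iio l.ord), {i | i ∈ S ∧ v i = x.1} := fun i hi =>
    mem_iUnion.2 ⟨⟨v i, hv i hi⟩, hi, rfl⟩
  have h1 : #S ≤ Cardinal.sum (fun x : ↥(Iio l.ord) => #{i | i ∈ S ∧ v i = x.1}) :=
    (mk_le_mk_of_subset hsub).trans mk_iUnion_le_sum_mk
  have h2 := h1.trans (Cardinal.sum_le_sum _ _ hall)
  rw [Cardinal.sum_const', Cardinal.mk_Iio_ordinal, card_ord,
    Cardinal.mul_eq_self (aleph0_le_lift.2 hl0)] at h2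
  have := lift_le.1 (hS.trans h2)
  exact absurd (Order.succ_le_iff.1 this) (lt_irrefl l)

lemma exists_cofinal_fiber {l : Cardinal.{u}} {Λ : Ordinal.{u}} (hcof : l < Λ.cof)
    (v : Ordinal → Ordinal) (hv : ∀ i, i < Λ → v i < l.ord) :
    ∃ x, x < l.ord ∧ ∀ β, β < Λ → ∃ i, β ≤ i ∧ i < Λ ∧ v i = x := by
  by_contra hc
  push_neg at hc
  have hc' : ∀ x, x < l.ord → ∃ β, β < Λ ∧ ∀ i, β ≤ i → i < Λ → v i ≠ x := by
    intro x hx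
    obtain ⟨β, hβ, h2⟩ := hc x hx
    exact ⟨β, hβ, fun i h1 h2' h3 => (h2 i h1 h2' h3).elim⟩
  choose β hβ1 hβ2 using hc'
  have hBΛ : Ordinal.bsup l.ord β < Λ :=
    Ordinal.bsup_lt_ord (by rw [card_ord]; exact hcof) hβ1
  exact hβ2 _ (hv _ hBΛ) _ (Ordinal.le_bsup β _ (hv _ hBΛ)) hBΛ rfl

/-! ### chunk 2 -/

lemma two_power_le {l c : Cardinal.{u}} (hl0 : ℵ₀ ≤ l) (hpl : l ^< l = l) (hc : c < l) :
    (2 : Cardinal) ^ c ≤ l := by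
  have h2l : (2 : Cardinal) ≤ l := le_trans (by exact_mod_cast (nat_lt_aleph0 2).le) hl0
  calc (2:Cardinal)^c ≤ l ^ c := power_le_power_right h2l
    _ ≤ l ^< l := le_powerlt l hc
    _ = l := hpl

lemma regular_of_powerlt {l : Cardinal.{u}} (hl0 : ℵ₀ ≤ l) (hpl : l ^< l = l) :
    l.ord.cof = l := by
  refine le_antisymm (by simpa [card_ord] using cof_le_card l.ord) ?_
  by_contra h
  push_neg at h
  have h1 := lt_power_cof hl0
  have h2 : l ^ l.ord.cof ≤ l ^< l := le_powerlt l h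
  rw [hpl] at h2
  exact absurd (h1.trans_le h2) (lt_irrefl _)

lemma exists_pairing {l : Cardinal.{u}} (hl0 : ℵ₀ ≤ l) :
    ∃ pe : Ordinal.{u} → Ordinal.{u} → Ordinal.{u},
      (∀ a b, a < l.ord → b < l.ord → pe a b < l.ord) ∧
      (∀ a b a' b', a < l.ord → b < l.ord → a' < l.ord → b' < l.ord →
        pe a b = pe a' b' → a = a' ∧ b = b') := by
  have h1 : #(↥(Iio l.ord) × ↥(Iio l.ord)) ≤ #(↥(Iio l.ord)) := by
    rw [mk_prod, Cardinal.lift_id, Cardinal.mk_Iio_ordinal, card_ord,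
      Cardinal.mul_eq_self (aleph0_le_lift.2 hl0)]
  obtain ⟨em⟩ := Cardinal.le_def _ _ |>.1 h1
  refine ⟨fun a b => if h : a < l.ord ∧ b < l.ord then (em (⟨a, h.1⟩, ⟨b, h.2⟩)).1 else 0,
    ?_, ?_⟩
  · intro a b ha hb
    dsimp only
    rw [dif_pos ⟨ha, hb⟩]
    exact (em _).2
  · intro a b a' b' ha hb ha' hb' heq
    dsimp only at heq
    rw [dif_pos ⟨ha, hb⟩, dif_pos ⟨ha', hb'⟩] at heq
    have := em.injective (Subtype.ext heq)
    refine ⟨congrArg (fun p => (p.1 : Ordinal)) this, congrArg (fun p => (p.2 : Ordinal)) this⟩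

lemma exists_code {l : Cardinal.{u}} (hl0 : ℵ₀ ≤ l) (hpl : l ^< l = l) {β : Ordinal.{u}}
    (hβ : β < l.ord) :
    ∃ cf : (Ordinal.{u} → Bool) → Ordinal.{u},
      (∀ u, cf u < l.ord) ∧
      (∀ u w, cf u = cf w → ∀ ξ, ξ ≤ β → u ξ = w ξ) ∧
      (∀ u w, (∀ ξ, ξ ≤ β → u ξ = w ξ) → cf u = cf w) := by
  have hβ1 : β + 1 < l.ord := by
    rw [Ordinal.add_one_eq_succ]
    exact (isSuccLimit_ord hl0).succ_lt hβ
  have hcard : #(↥(Iio (β+1)) → Bool) ≤ #(↥(Iio l.ord)) := by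
    rw [Cardinal.mk_arrow, mk_bool, Cardinal.mk_Iio_ordinal, Cardinal.mk_Iio_ordinal, card_ord,
      Cardinal.lift_lift]
    have e2 : Cardinal.lift.{u+1,0} 2 = Cardinal.lift.{u+1,u} (2 : Cardinal.{u}) := by simp
    rw [e2, ← Cardinal.lift_power, Cardinal.lift_le]
    exact two_power_le hl0 hpl (by rwa [← Cardinal.lt_ord])
  obtain ⟨em⟩ := Cardinal.le_def _ _ |>.1 hcard
  refine ⟨fun u => (em (fun ξ : ↥(Iio (β+1)) => u ξ)).1, fun u => (em _).2, ?_, ?_⟩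
  · intro u w h ξ hξ
    have := em.injective (Subtype.ext h)
    have hξ' : ξ ∈ Iio (β+1) := by
      rw [mem_Iio, Ordinal.add_one_eq_succ, Order.lt_succ_iff]; exact hξ
    exact congrFun this ⟨ξ, hξ'⟩
  · intro u w h
    have heq : (fun ξ : ↥(Iio (β+1)) => u ξ.1) = (fun ξ : ↥(Iio (β+1)) => w ξ.1) :=
      funext fun ξ => h ξ.1
        (Order.lt_add_one_iff.1 ξ.2)
    show (em (fun ξ : ↥(Iio (β+1)) => u ξ.1)).1 = (em (fun ξ : ↥(Iio (β+1)) => w ξ.1)).1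
    rw [heq]

lemma id_le_of_mono {Λ : Ordinal.{u}} {f : Ordinal → Ordinal}
    (hf : ∀ i j, i < j → j < Λ → f i < f j) : ∀ i, i < Λ → i ≤ f i := by
  intro i
  induction i using Ordinal.induction with
  | h i IH =>
  intro hi
  by_contra h
  push_neg at h
  exact absurd (hf (f i) i h hi) (not_lt.2 (IH (f i) h (h.trans hi)))

lemma parity_ne (a b : Ordinal.{u}) : 2 * a + 1 ≠ 2 * b := by
  intro h
  have h1 : (2 * a + 1) % 2 = 1 := by
    rw [Ordinal.mul_add_mod_self]
    exact Ordinal.mod_eq_of_lt one_lt_two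
  have h2 : (2 * b) % 2 = 0 := Ordinal.mul_mod 2 b
  rw [h, h2] at h1
  exact one_ne_zero h1.symm

lemma two_mul_ord_le {κ : Cardinal.{u}} (hκ : κ ≠ 0) : 2 * κ.ord ≤ (2 * κ).ord := by
  rcases lt_or_ge κ ℵ₀ with hfin | hinf
  · obtain ⟨n, rfl⟩ := Cardinal.lt_aleph0.1 hfin
    have : (2 : Cardinal) * (n : Cardinal) = ((2 * n : ℕ) : Cardinal) := by push_cast; ring
    rw [this, ord_nat, ord_nat]
    have : (2 : Ordinal) * (n : Ordinal) = ((2 * n : ℕ) : Ordinal) := by push_cast; ring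
    rw [this]
  · have h2κ : 2 * κ = κ :=
      Cardinal.mul_eq_right hinf (le_trans (by exact_mod_cast (nat_lt_aleph0 2).le) hinf) (by exact_mod_cast Nat.succ_ne_zero 1)
    rw [h2κ]
    obtain ⟨q, hq⟩ := (Ordinal.isSuccLimit_iff_omega0_dvd.1 (isSuccLimit_ord hinf)).2
    have h2ω : (2:Ordinal) < ω := by exact_mod_cast nat_lt_omega0 2
    rw [hq, ← mul_assoc, Ordinal.mul_omega0 zero_lt_two h2ω]

/-! ### chunk 3 : pruning and the two-directions lemma -/

lemma node_congr {y : Ordinal.{u} → Ordinal → Bool} {Z : Set Ordinal} {δ : Ordinal}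
    {u w : Ordinal → Bool} (h : ∀ ξ, ξ < δ → u ξ = w ξ) :
    node y Z δ u = node y Z δ w := by
  unfold node
  ext j
  exact ⟨fun ⟨h1, h2⟩ => ⟨h1, fun ξ hξ => (h2 ξ hξ).trans (h ξ hξ)⟩,
    fun ⟨h1, h2⟩ => ⟨h1, fun ξ hξ => (h2 ξ hξ).trans (h ξ hξ).symm⟩⟩

lemma prune_subset {l : Cardinal.{u}} {y : Ordinal → Ordinal → Bool} {Z : Set Ordinal} :
    prune l y Z ⊆ Z := fun _ hi => hi.1

lemma big_prune {l : Cardinal.{u}} {y : Ordinal → Ordinal → Bool}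
    (hl0 : ℵ₀ ≤ l) (hpl : l ^< l = l)
    {Z : Set Ordinal} (hZ : Big l Z) : Big l (prune l y Z) := by
  by_contra hbig
  have hbad : Big l (Z \ prune l y Z) := by
    rcases big_of_union hl0 (Z := Z) (A := prune l y Z) (B := Z \ prune l y Z)
      (fun j hj => by
        by_cases h : j ∈ prune l y Z
        · exact Or.inl h
        · exact Or.inr ⟨hj, h⟩) hZ with h | h
    · exact absurd h hbig
    · exact h
  have hwit : ∀ i, ∃ δ, δ < l.ord ∧
      (i ∈ Z \ prune l y Z → ¬ Big l (node y Z δ (y i))) := by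
    intro i
    by_cases hi : i ∈ Z \ prune l y Z
    · have : ¬ (∀ δ, δ < l.ord → Big l (node y Z δ (y i))) := fun hall => hi.2 ⟨hi.1, hall⟩
      push_neg at this
      obtain ⟨δ, h1, h2⟩ := this
      exact ⟨δ, h1, fun _ => h2⟩
    · exact ⟨0, (isSuccLimit_ord hl0).pos, fun h => absurd h hi⟩
  choose Dl hDl1 hDl2 using hwit
  obtain ⟨pe, hpe1, hpe2⟩ := exists_pairing hl0
  have hcode : ∀ β : Ordinal.{u}, ∃ cf : (Ordinal.{u} → Bool) → Ordinal.{u}, β < l.ord →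
      ((∀ u, cf u < l.ord) ∧
       (∀ u w, cf u = cf w → ∀ ξ, ξ ≤ β → u ξ = w ξ) ∧
       (∀ u w, (∀ ξ, ξ ≤ β → u ξ = w ξ) → cf u = cf w)) := by
    intro β
    by_cases hβ : β < l.ord
    · obtain ⟨cf, h1, h2, h3⟩ := exists_code hl0 hpl hβ
      exact ⟨cf, fun _ => ⟨h1, h2, h3⟩⟩
    · exact ⟨fun _ => 0, fun h => absurd h hβ⟩
  choose cfF hcfF using hcode
  set v : Ordinal → Ordinal := fun i => pe (Dl i) (cfF (Dl i) (y i)) with hv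
  have hvlt : ∀ i ∈ Z \ prune l y Z, v i < l.ord := fun i _ =>
    hpe1 _ _ (hDl1 i) ((hcfF (Dl i) (hDl1 i)).1 (y i))
  obtain ⟨x, _, hW⟩ := exists_big_fiber hl0 _ hbad v hvlt
  set W := {i | i ∈ Z \ prune l y Z ∧ v i = x} with hWdef
  obtain ⟨i0, hi0⟩ := hW.nonempty
  have hWsub : W ⊆ node y Z (Dl i0) (y i0) := by
    rintro j ⟨hjZ, hjv⟩
    refine ⟨hjZ.1, fun ξ hξ => ?_⟩
    have hveq : v j = v i0 := hjv.trans hi0.2.symm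
    rw [hv] at hveq
    obtain ⟨hD, hcf⟩ := hpe2 _ _ _ _ (hDl1 j) ((hcfF _ (hDl1 j)).1 _)
      (hDl1 i0) ((hcfF _ (hDl1 i0)).1 _) hveq
    rw [hD] at hcf
    exact (hcfF (Dl i0) (hDl1 i0)).2.1 _ _ hcf ξ (le_of_lt (hD ▸ hξ))
  exact hDl2 i0 hi0.1 (hW.mono hWsub)

lemma big_cut {l : Cardinal.{u}} (hl0 : ℵ₀ ≤ l) {A : Set Ordinal}
    (hA : Big l A) {β : Ordinal} (hβ : β < (Order.succ l).ord) :
    Big l {j | j ∈ A ∧ β ≤ j} := by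
  rcases big_of_union hl0 (Z := A) (A := A ∩ Iio β) (B := {j | j ∈ A ∧ β ≤ j})
    (fun j hj => by
      rcases lt_or_ge j β with h | h
      · exact Or.inl ⟨hj, h⟩
      · exact Or.inr ⟨hj, h⟩) hA with h | h
  · exfalso
    have h1 : #(A ∩ Iio β : Set Ordinal) ≤ Cardinal.lift.{u+1} l := by
      refine le_trans (mk_le_mk_of_subset inter_subset_right) ?_
      rw [Cardinal.mk_Iio_ordinal, Cardinal.lift_le]
      exact Order.lt_succ_iff.1 (Cardinal.lt_ord.1 hβ)
    have := lift_le.1 (h.trans h1)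
    exact absurd (Order.succ_le_iff.1 this) (lt_irrefl l)
  · exact h

lemma exists_unbounded_DSet {l : Cardinal.{u}} {y : Ordinal → Ordinal → Bool}
    (hl0 : ℵ₀ ≤ l) (hpl : l ^< l = l)
    (hsupp : ∀ i ξ, l.ord ≤ ξ → y i ξ = false)
    {Z : Set Ordinal} (hZ : Big l Z)
    (hinj : ∀ i j, i ∈ Z → j ∈ Z → i ≠ j → y i ≠ y j)
    (b : Bool) :
    ∃ i ∈ Z, ∀ β, β < l.ord → ∃ δ, β ≤ δ ∧ δ ∈ DSet l y Z i b := by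
  by_contra hc
  push_neg at hc
  set Z' := prune l y Z with hZ'def
  have hZ' : Big l Z' := big_prune hl0 hpl hZ
  have hZ'Z : Z' ⊆ Z := prune_subset
  have hbd : ∀ i, ∃ β, β < l.ord ∧ (i ∈ Z' → ∀ δ ∈ DSet l y Z i b, δ < β) := by
    intro i
    by_cases hi : i ∈ Z'
    · obtain ⟨β, hβ, h2⟩ := hc i (hZ'Z hi)
      refine ⟨β, hβ, fun _ δ hδ => ?_⟩
      by_contra hle
      exact h2 δ (not_lt.1 hle) hδ
    · exact ⟨0, (isSuccLimit_ord hl0).pos, fun h => absurd h hi⟩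
  choose B hB1 hB2 using hbd
  obtain ⟨pe, hpe1, hpe2⟩ := exists_pairing hl0
  have hcode : ∀ β : Ordinal.{u}, ∃ cf : (Ordinal.{u} → Bool) → Ordinal.{u}, β < l.ord →
      ((∀ u, cf u < l.ord) ∧
       (∀ u w, cf u = cf w → ∀ ξ, ξ ≤ β → u ξ = w ξ) ∧
       (∀ u w, (∀ ξ, ξ ≤ β → u ξ = w ξ) → cf u = cf w)) := by
    intro β
    by_cases hβ : β < l.ord
    · obtain ⟨cf, h1, h2, h3⟩ := exists_code hl0 hpl hβ
      exact ⟨cf, fun _ => ⟨h1, h2, h3⟩⟩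
    · exact ⟨fun _ => 0, fun h => absurd h hβ⟩
  choose cfF hcfF using hcode
  set v : Ordinal → Ordinal := fun i => pe (B i) (cfF (B i) (y i)) with hv
  have hvlt : ∀ i ∈ Z', v i < l.ord := fun i _ =>
    hpe1 _ _ (hB1 i) ((hcfF (B i) (hB1 i)).1 (y i))
  obtain ⟨x, _, hW⟩ := exists_big_fiber hl0 _ hZ' v hvlt
  set W := {i | i ∈ Z' ∧ v i = x} with hWdef
  obtain ⟨i, hiW, j, hjW, hij⟩ := hW.nontrivial hl0
  have hveq : v i = v j := hiW.2.trans hjW.2.symm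
  rw [hv] at hveq
  obtain ⟨hBeq, hcfeq⟩ := hpe2 _ _ _ _ (hB1 i) ((hcfF _ (hB1 i)).1 _)
    (hB1 j) ((hcfF _ (hB1 j)).1 _) hveq
  rw [hBeq] at hcfeq
  have hrest : ∀ ξ, ξ ≤ B j → y i ξ = y j ξ :=
    (hcfF (B j) (hB1 j)).2.1 _ _ hcfeq
  have hyij : y i ≠ y j := hinj i j (hZ'Z hiW.1) (hZ'Z hjW.1) hij
  set D := Dfn (y i) (y j) with hDdef
  have hDspec : y i D ≠ y j D := Dfn_spec hyij
  have hDlt : D < l.ord := by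
    obtain ⟨ξ0, hξ0⟩ := Function.ne_iff.1 hyij
    have hξ0l : ξ0 < l.ord := by
      by_contra hge
      exact hξ0 (by rw [hsupp i ξ0 (not_lt.1 hge), hsupp j ξ0 (not_lt.1 hge)])
    exact lt_of_le_of_lt (csInf_le' hξ0) hξ0l
  have hDgt : B j < D := by
    by_contra hle
    exact hDspec (hrest D (not_lt.1 hle))
  have hD1 : D + 1 < l.ord := by
    rw [Ordinal.add_one_eq_succ]
    exact (isSuccLimit_ord hl0).succ_lt hDlt
  by_cases hcase : y i D = !b
  · have hyj : y j D = b := by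
      have := bool_ne_iff.1 hDspec.symm
      rw [hcase] at this
      simpa using this
    have hDin : D ∈ DSet l y Z i b := by
      refine ⟨hDlt, hcase, ?_⟩
      have heq : node y Z (D+1) (ow (y i) D b) = node y Z (D+1) (y j) := by
        refine node_congr (fun ξ hξ => ?_)
        rcases eq_or_ne ξ D with rfl | hne
        · rw [ow]; simp [hyj]
        · rw [ow]
          simp only [if_neg hne]
          exact Dfn_min (lt_of_le_of_ne (Order.lt_add_one_iff.1 hξ) hne)
      rw [heq]
      exact hjW.1.2 (D+1) hD1
    have := hB2 i hiW.1 D hDin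
    rw [hBeq] at this
    exact absurd hDgt (not_lt.2 this.le)
  · have hyi : y i D = b := by simpa using bool_ne_iff.1 hcase
    have hyj : y j D = !b := by
      have h := bool_ne_iff.1 hDspec.symm
      rw [hyi] at h
      exact h
    have hDin : D ∈ DSet l y Z j b := by
      refine ⟨hDlt, hyj, ?_⟩
      have heq : node y Z (D+1) (ow (y j) D b) = node y Z (D+1) (y i) := by
        refine node_congr (fun ξ hξ => ?_)
        rcases eq_or_ne ξ D with rfl | hne
        · rw [ow]; simp [hyi]
        · rw [ow]
          simp only [if_neg hne]
          exact (Dfn_min (u := y i) (v := y j)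
            (lt_of_le_of_ne (Order.lt_add_one_iff.1 hξ) hne)).symm
      rw [heq]
      exact hiW.1.2 (D+1) hD1
    have hD' : D ∈ DSet l y Z j b := hDin
    have := hB2 j hjW.1 D (by rwa [hDdef, Dfn_comm] at hD')
    exact absurd hDgt (not_lt.2 this.le)

lemma bit_cross {l : Cardinal.{u}} {y : Ordinal → Ordinal → Bool} {Z : Set Ordinal}
    {i0 : Ordinal} {b : Bool} {δ1 δ2 : Ordinal}
    (h1 : δ1 ∈ DSet l y Z i0 b) (h2 : δ2 ∈ DSet l y Z i0 b) (hlt : δ1 < δ2)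
    {j1 j2 : Ordinal} (hj1 : j1 ∈ node y Z (δ1+1) (ow (y i0) δ1 b))
    (hj2 : j2 ∈ node y Z (δ2+1) (ow (y i0) δ2 b)) :
    Bitf (y j1) (y j2) = !b := by
  have e1 : ∀ ξ, ξ < δ1 → y j1 ξ = y j2 ξ := by
    intro ξ hξ
    have a1 := hj1.2 ξ (hξ.trans (lt_of_le_of_lt le_rfl (by
      rw [Ordinal.add_one_eq_succ]; exact Order.lt_succ δ1)))
    have a2 := hj2.2 ξ ((hξ.trans hlt).trans (by
      rw [Ordinal.add_one_eq_succ]; exact Order.lt_succ δ2))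
    rw [a1, a2, ow, ow]
    simp [hξ.ne, (hξ.trans hlt).ne]
  have e2 : y j1 δ1 = b := by
    have := hj1.2 δ1 (by rw [Ordinal.add_one_eq_succ]; exact Order.lt_succ δ1)
    rw [this, ow]; simp
  have e3 : y j2 δ1 = !b := by
    have := hj2.2 δ1 (by
      rw [Ordinal.add_one_eq_succ]; exact (hlt.trans (Order.lt_succ δ2)))
    rw [this, ow]
    simp only [if_neg hlt.ne]
    exact h1.2.1
  rw [Bitf_eq e1 (by rw [e2, e3]; cases b <;> simp), e3]

/-! ### chunk 4 : no long monochromatic lex-chains -/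

set_option maxHeartbeats 1000000 in
lemma no_const_bit {l : Cardinal.{u}} {Λ : Ordinal.{u}} {y : Ordinal → Ordinal → Bool}
    (hl0 : ℵ₀ ≤ l) (hpl : l ^< l = l) (hlcof : l < Λ.cof)
    (hsupp : ∀ i ξ, l.ord ≤ ξ → y i ξ = false)
    (hinj : ∀ i j, i < j → j < Λ → y i ≠ y j)
    (b : Bool) (hb : ∀ i j, i < j → j < Λ → Bitf (y i) (y j) = b) : False := by
  have hΛlim : Order.IsSuccLimit Λ := by
    rcases Ordinal.zero_or_succ_or_isSuccLimit Λ with rfl | ⟨a, rfl⟩ | h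
    · rw [Ordinal.cof_zero] at hlcof
      exact absurd hlcof (not_lt.2 ((zero_le : (0:Cardinal) ≤ l)))
    · rw [Ordinal.cof_succ] at hlcof
      exact absurd hlcof (not_lt.2 (one_le_aleph0.trans hl0))
    · exact h
  have hsucclt : ∀ i, i < Λ → i + 1 < Λ := by
    intro i hi
    rw [Ordinal.add_one_eq_succ]
    exact hΛlim.succ_lt hi
  obtain ⟨pe, hpe1, hpe2⟩ := exists_pairing hl0
  have hcode : ∀ β : Ordinal.{u}, ∃ cf : (Ordinal.{u} → Bool) → Ordinal.{u}, β < l.ord →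
      ((∀ u, cf u < l.ord) ∧
       (∀ u w, cf u = cf w → ∀ ξ, ξ ≤ β → u ξ = w ξ) ∧
       (∀ u w, (∀ ξ, ξ ≤ β → u ξ = w ξ) → cf u = cf w)) := by
    intro β
    by_cases hβ : β < l.ord
    · obtain ⟨cf, h1, h2, h3⟩ := exists_code hl0 hpl hβ
      exact ⟨cf, fun _ => ⟨h1, h2, h3⟩⟩
    · exact ⟨fun _ => 0, fun h => absurd h hβ⟩
  choose cfF hcfF using hcode
  have hyne : ∀ i, i < Λ → y i ≠ y (i+1) := fun i hi =>
    hinj i (i+1) (by rw [Ordinal.add_one_eq_succ]; exact Order.lt_succ i) (hsucclt i hi)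
  have hDlt : ∀ i, i < Λ → Dfn (y i) (y (i+1)) < l.ord := by
    intro i hi
    obtain ⟨ξ0, hξ0⟩ := Function.ne_iff.1 (hyne i hi)
    have hξ0l : ξ0 < l.ord := by
      by_contra hge
      exact hξ0 (by rw [hsupp i ξ0 (not_lt.1 hge), hsupp (i+1) ξ0 (not_lt.1 hge)])
    exact lt_of_le_of_lt (csInf_le' hξ0) hξ0l
  set v : Ordinal → Ordinal := fun i =>
    if h : i < Λ then pe (Dfn (y i) (y (i+1))) (cfF (Dfn (y i) (y (i+1))) (y i)) else 0
    with hv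
  have hvlt : ∀ i, i < Λ → v i < l.ord := by
    intro i hi
    rw [hv]
    dsimp only
    rw [dif_pos hi]
    exact hpe1 _ _ (hDlt i hi) ((hcfF _ (hDlt i hi)).1 _)
  obtain ⟨x, _, hcf⟩ := exists_cofinal_fiber hlcof v hvlt
  obtain ⟨i, _, hiΛ, hvi⟩ := hcf 0 hΛlim.pos
  obtain ⟨j, hjge, hjΛ, hvj⟩ := hcf (i+1+1) (hsucclt _ (hsucclt _ hiΛ))
  have hij1 : i + 1 < j := lt_of_lt_of_le (by
    rw [Ordinal.add_one_eq_succ (i+1)]; exact Order.lt_succ (i+1)) hjge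
  have hveq : v i = v j := hvi.trans hvj.symm
  rw [hv] at hveq
  dsimp only at hveq
  rw [dif_pos hiΛ, dif_pos hjΛ] at hveq
  obtain ⟨hDeq, hcfeq⟩ := hpe2 _ _ _ _ (hDlt i hiΛ) ((hcfF _ (hDlt i hiΛ)).1 _)
    (hDlt j hjΛ) ((hcfF _ (hDlt j hjΛ)).1 _) hveq
  set δ := Dfn (y i) (y (i+1)) with hδdef
  have hrest : ∀ ξ, ξ ≤ δ → y i ξ = y j ξ := by
    rw [hDeq] at hcfeq
    intro ξ hξ
    exact (hcfF _ (hDlt j hjΛ)).2.1 _ _ hcfeq ξ (hDeq ▸ hξ)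
  have hspec : y i δ ≠ y (i+1) δ := Dfn_spec (hyne i hiΛ)
  have h1 : y (i+1) δ = b := hb i (i+1) (by
    rw [Ordinal.add_one_eq_succ]; exact Order.lt_succ i) (hsucclt i hiΛ)
  have h2 : y i δ = !b := by
    have h := bool_ne_iff.1 hspec
    rw [h1] at h
    exact h
  have h3 : y j δ = !b := by rw [← hrest δ le_rfl]; exact h2
  have h4 : ∀ ξ, ξ < δ → y (i+1) ξ = y j ξ := by
    intro ξ hξ
    rw [← Dfn_min hξ]
    exact hrest ξ hξ.le
  have h5 : y (i+1) δ ≠ y j δ := by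
    rw [h1, h3]
    cases b <;> simp
  have h6 := hb (i+1) j hij1 hjΛ
  rw [Bitf_eq h4 h5, h3] at h6
  exact absurd h6 (by cases b <;> simp)

/-! ### chunk 5 : the extraction lemma -/

set_option maxHeartbeats 4000000 in
lemma extract {l : Cardinal.{u}} {y : Ordinal → Ordinal → Bool}
    (hl0 : ℵ₀ ≤ l) (hpl : l ^< l = l)
    (hsupp : ∀ i ξ, l.ord ≤ ξ → y i ξ = false)
    (hinj : ∀ i j, i < j → j < (Order.succ l).ord → y i ≠ y j) :
    ∀ γ, γ < (Order.succ l).ord → ∀ (bo : Bool) (Z : Set Ordinal),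
      Z ⊆ Iio (Order.succ l).ord → Big l Z →
      ∃ g : Ordinal → Ordinal, (∀ k, k < γ → g k ∈ Z) ∧
        (∀ k k', k < k' → k' < γ → g k < g k' ∧ Bitf (y (g k)) (y (g k')) = bo) := by
  have hcofP : ((Order.succ l).ord).cof = Order.succ l := (isRegular_succ hl0).cof_eq
  have hPlim : Order.IsSuccLimit ((Order.succ l).ord) := isSuccLimit_ord (hl0.trans (le_succ l))
  intro γ
  induction γ using Ordinal.induction with
  | h γ IH =>
  intro hγP bo Z hZP hZ
  have hinjZ : ∀ i j, i ∈ Z → j ∈ Z → i ≠ j → y i ≠ y j := by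
    intro i j hi hj hne
    rcases hne.lt_or_gt with h | h
    · exact hinj i j h (hZP hj)
    · exact fun he => (hinj j i h (hZP hi)) he.symm
  rcases Ordinal.zero_or_succ_or_isSuccLimit γ with rfl | ⟨δ, rfl⟩ | hlim
  · exact ⟨fun _ => 0, fun k hk => absurd hk (not_lt_zero (a := k)),
      fun k k' _ h => absurd h (not_lt_zero (a := k'))⟩
  · -- successor case
    obtain ⟨i0, hi0Z, hDu⟩ := exists_unbounded_DSet hl0 hpl hsupp hZ hinjZ (!bo)
    obtain ⟨δ1, _, hδ1⟩ := hDu 0 (isSuccLimit_ord hl0).pos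
    have hδ1l : δ1 + 1 < l.ord := by
      rw [Ordinal.add_one_eq_succ]
      exact (isSuccLimit_ord hl0).succ_lt hδ1.1
    obtain ⟨δ2, hge, hδ2⟩ := hDu (δ1+1) hδ1l
    have hδlt : δ1 < δ2 := lt_of_lt_of_le (by
      rw [Ordinal.add_one_eq_succ]; exact Order.lt_succ δ1) hge
    have hδP : δ < (Order.succ l).ord := (Order.lt_succ δ).trans hγP
    obtain ⟨g0, hg0Z, hg0p⟩ := IH δ (Order.lt_succ δ) hδP bo
      (node y Z (δ1+1) (ow (y i0) δ1 (!bo)))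
      (fun j hj => hZP hj.1) hδ1.2.2
    have hβP : Ordinal.bsup δ (fun k _ => g0 k + 1) < (Order.succ l).ord := by
      apply Ordinal.bsup_lt_ord
      · rw [hcofP]; exact Cardinal.lt_ord.1 hδP
      · intro k hk
        rw [Ordinal.add_one_eq_succ]
        exact hPlim.succ_lt (hZP (hg0Z k hk).1)
    obtain ⟨t, htnode, htβ⟩ := (big_cut hl0 hδ2.2.2 hβP).nonempty
    refine ⟨fun k => if k < δ then g0 k else t, ?_, ?_⟩
    · intro k hk
      by_cases h : k < δ
      · simp only [if_pos h]; exact (hg0Z k h).1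
      · simp only [if_neg h]; exact htnode.1
    · intro k k' hkk' hk'
      have hk'le : k' ≤ δ := by rwa [Order.lt_succ_iff] at hk'
      by_cases h' : k' < δ
      · have hk : k < δ := hkk'.trans h'
        simp only [if_pos hk, if_pos h']
        exact hg0p k k' hkk' h'
      · have hk'eq : k' = δ := le_antisymm hk'le (not_lt.1 h')
        have hk : k < δ := hk'eq ▸ hkk'
        simp only [if_pos hk, if_neg h']
        constructor
        · refine lt_of_lt_of_le ?_ htβ
          refine lt_of_lt_of_le ?_ (Ordinal.le_bsup _ k hk)
          rw [Ordinal.add_one_eq_succ]; exact Order.lt_succ _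
        · have := bit_cross hδ1 hδ2 hδlt (hg0Z k hk) htnode
          rwa [Bool.not_not] at this
  · -- limit case
    classical
    obtain ⟨i0, hi0Z, hDu⟩ := exists_unbounded_DSet hl0 hpl hsupp hZ hinjZ (!bo)
    set DS := DSet l y Z i0 (!bo) with hDS
    obtain ⟨fs, hfs⟩ := Ordinal.exists_fundamental_sequence γ
    set q : Ordinal → Ordinal := fun m => if h : m < γ.cof.ord then fs m h + 1 else 0 with hq
    have hqlt : ∀ m, m < γ.cof.ord → q m < γ := by
      intro m hm
      rw [hq]
      dsimp only
      rw [dif_pos hm, Ordinal.add_one_eq_succ]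
      exact hlim.succ_lt (hfs.lt hm)
    have hcov : ∀ k, k < γ → ∃ m, m < γ.cof.ord ∧ k < q m := by
      intro k hk
      by_contra hc
      push_neg at hc
      have hble : Ordinal.blsub γ.cof.ord fs ≤ k := by
        apply Ordinal.blsub_le_iff.2
        intro m hm
        have h2 := hc m hm
        rw [hq] at h2
        dsimp only at h2
        rw [dif_pos hm] at h2
        exact lt_of_lt_of_le (by rw [Ordinal.add_one_eq_succ]; exact Order.lt_succ _) h2
      rw [hfs.blsub_eq] at hble
      exact absurd hk (not_lt.2 hble)
    have hcofl : l.ord.cof = l := regular_of_powerlt hl0 hpl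
    have hγcardl : γ.card ≤ l := Order.lt_succ_iff.1 (Cardinal.lt_ord.1 hγP)
    set F : Ordinal → Ordinal × (Ordinal → Ordinal) :=
      Ordinal.lt_wf.fix (fun m rec =>
        (sInf {x | x ∈ DS ∧ ∀ m' (h : m' < m), (rec m' h).1 < x},
         if hex : ∃ g : Ordinal → Ordinal,
             (∀ k, k < q m → g k ∈ node y Z
                 ((sInf {x | x ∈ DS ∧ ∀ m' (h : m' < m), (rec m' h).1 < x}) + 1)
                 (ow (y i0) (sInf {x | x ∈ DS ∧ ∀ m' (h : m' < m), (rec m' h).1 < x}) (!bo)) ∧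
               Ordinal.bsup m (fun m' h => Ordinal.bsup (q m')
                 (fun k _ => (rec m' h).2 k + 1)) ≤ g k) ∧
             (∀ k k', k < k' → k' < q m → g k < g k' ∧ Bitf (y (g k)) (y (g k')) = bo)
           then hex.choose else fun _ => 0)) with hFdef
    have hFeq : ∀ m, F m =
        (sInf {x | x ∈ DS ∧ ∀ m' (_ : m' < m), (F m').1 < x},
         if hex : ∃ g : Ordinal → Ordinal,
             (∀ k, k < q m → g k ∈ node y Z
                 ((sInf {x | x ∈ DS ∧ ∀ m' (_ : m' < m), (F m').1 < x}) + 1)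
                 (ow (y i0) (sInf {x | x ∈ DS ∧ ∀ m' (_ : m' < m), (F m').1 < x}) (!bo)) ∧
               Ordinal.bsup m (fun m' _ => Ordinal.bsup (q m')
                 (fun k _ => (F m').2 k + 1)) ≤ g k) ∧
             (∀ k k', k < k' → k' < q m → g k < g k' ∧ Bitf (y (g k)) (y (g k')) = bo)
           then hex.choose else fun _ => 0) := by
      intro m
      rw [hFdef]
      exact WellFounded.fix_eq _ _ m
    have hF1 : ∀ m, (F m).1 = sInf {x | x ∈ DS ∧ ∀ m' (_ : m' < m), (F m').1 < x} := by
      intro m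
      rw [hFeq m]
    have good : ∀ m, m < γ.cof.ord →
        ((F m).1 ∈ DS ∧ (∀ m', m' < m → (F m').1 < (F m).1)) ∧
        ((∀ k, k < q m → (F m).2 k ∈ node y Z ((F m).1 + 1) (ow (y i0) ((F m).1) (!bo)) ∧
            Ordinal.bsup m (fun m' _ => Ordinal.bsup (q m')
              (fun k _ => (F m').2 k + 1)) ≤ (F m).2 k) ∧
         (∀ k k', k < k' → k' < q m → (F m).2 k < (F m).2 k' ∧
            Bitf (y ((F m).2 k)) (y ((F m).2 k')) = bo)) := by
      intro m
      induction m using Ordinal.induction with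
      | h m IHm =>
      intro hmγ.cof.ord
      have hcardm : m.card < l := by
        have h1 : m.card < γ.cof := by
          rw [← Cardinal.lt_ord]
          exact hmγ.cof.ord
        exact lt_of_lt_of_le h1 ((Ordinal.cof_le_card γ).trans hγcardl)
      have hbnd : Ordinal.bsup m (fun m' _ => (F m').1 + 1) < l.ord := by
        apply Ordinal.bsup_lt_ord
        · rw [hcofl]; exact hcardm
        · intro m' hm'
          have h3 := ((IHm m' hm' (hm'.trans hmγ.cof.ord)).1.1).1
          rw [Ordinal.add_one_eq_succ]
          exact (isSuccLimit_ord hl0).succ_lt h3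
      obtain ⟨x0, hx0ge, hx0DS⟩ := hDu _ hbnd
      have hSne : {x | x ∈ DS ∧ ∀ m' (_ : m' < m), (F m').1 < x}.Nonempty := by
        refine ⟨x0, hx0DS, fun m' hm' => ?_⟩
        refine lt_of_lt_of_le ?_ ((Ordinal.le_bsup _ m' hm').trans hx0ge)
        rw [Ordinal.add_one_eq_succ]; exact Order.lt_succ _
      have hfirst : (F m).1 ∈ DS ∧ ∀ m', m' < m → (F m').1 < (F m).1 := by
        have hmem := csInf_mem hSne
        rw [← hF1 m] at hmem
        exact ⟨hmem.1, fun m' hm' => hmem.2 m' hm'⟩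
      have hBetaP : Ordinal.bsup m (fun m' _ => Ordinal.bsup (q m')
          (fun k _ => (F m').2 k + 1)) < (Order.succ l).ord := by
        apply Ordinal.bsup_lt_ord
        · rw [hcofP]
          exact lt_of_le_of_lt (hcardm.le.trans le_rfl) (Order.lt_succ l)
        · intro m' hm'
          apply Ordinal.bsup_lt_ord
          · rw [hcofP]
            exact Cardinal.lt_ord.1 ((hqlt m' (hm'.trans hmγ.cof.ord)).trans hγP)
          · intro k hk
            have h4 := ((IHm m' hm' (hm'.trans hmγ.cof.ord)).2.1 k hk).1.1
            rw [Ordinal.add_one_eq_succ]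
            exact hPlim.succ_lt (hZP h4)
      have hZm : Big l {j | j ∈ node y Z ((F m).1 + 1) (ow (y i0) ((F m).1) (!bo)) ∧
          Ordinal.bsup m (fun m' _ => Ordinal.bsup (q m')
            (fun k _ => (F m').2 k + 1)) ≤ j} :=
        big_cut hl0 (hfirst.1).2.2 hBetaP
      have hex : ∃ g : Ordinal → Ordinal,
          (∀ k, k < q m → g k ∈ node y Z ((F m).1 + 1) (ow (y i0) ((F m).1) (!bo)) ∧
            Ordinal.bsup m (fun m' _ => Ordinal.bsup (q m')
              (fun k _ => (F m').2 k + 1)) ≤ g k) ∧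
          (∀ k k', k < k' → k' < q m → g k < g k' ∧ Bitf (y (g k)) (y (g k')) = bo) := by
        obtain ⟨g, hg1, hg2⟩ := IH (q m) (hqlt m hmγ.cof.ord) ((hqlt m hmγ.cof.ord).trans hγP) bo
          {j | j ∈ node y Z ((F m).1 + 1) (ow (y i0) ((F m).1) (!bo)) ∧
            Ordinal.bsup m (fun m' _ => Ordinal.bsup (q m')
              (fun k _ => (F m').2 k + 1)) ≤ j}
          (fun j hj => hZP hj.1.1) hZm
        exact ⟨g, fun k hk => ⟨(hg1 k hk).1, (hg1 k hk).2⟩, hg2⟩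
      refine ⟨hfirst, ?_⟩
      have h2 : (F m).2 = (if hex2 : ∃ g : Ordinal → Ordinal,
             (∀ k, k < q m → g k ∈ node y Z
                 ((sInf {x | x ∈ DS ∧ ∀ m' (_ : m' < m), (F m').1 < x}) + 1)
                 (ow (y i0) (sInf {x | x ∈ DS ∧ ∀ m' (_ : m' < m), (F m').1 < x}) (!bo)) ∧
               Ordinal.bsup m (fun m' _ => Ordinal.bsup (q m')
                 (fun k _ => (F m').2 k + 1)) ≤ g k) ∧
             (∀ k k', k < k' → k' < q m → g k < g k' ∧ Bitf (y (g k)) (y (g k')) = bo)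
           then hex2.choose else fun _ => 0) := congrArg Prod.snd (hFeq m)
      rw [← hF1 m] at h2
      rw [dif_pos hex] at h2
      rw [h2]
      exact hex.choose_spec
    have hmIdxmem : ∀ k, k < γ → (sInf {m | m < γ.cof.ord ∧ k < q m}) < γ.cof.ord ∧
        k < q (sInf {m | m < γ.cof.ord ∧ k < q m}) := by
      intro k hk
      exact csInf_mem (hcov k hk)
    refine ⟨fun k => (F (sInf {m | m < γ.cof.ord ∧ k < q m})).2 k, ?_, ?_⟩
    · intro k hk
      obtain ⟨h1, h2⟩ := hmIdxmem k hk
      exact (((good _ h1).2.1 k h2).1).1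
    · intro k k' hkk' hk'
      have hkγ := hkk'.trans hk'
      obtain ⟨hm1, hm2⟩ := hmIdxmem k hkγ
      obtain ⟨hm1', hm2'⟩ := hmIdxmem k' hk'
      have hmle : sInf {m | m < γ.cof.ord ∧ k < q m} ≤ sInf {m | m < γ.cof.ord ∧ k' < q m} := by
        refine csInf_le_csInf (OrderBot.bddBelow _) ⟨_, hm1', hm2'⟩ ?_
        intro m hm
        exact ⟨hm.1, hkk'.trans hm.2⟩
      set M1 := sInf {m | m < γ.cof.ord ∧ k < q m} with hM1
      set M2 := sInf {m | m < γ.cof.ord ∧ k' < q m} with hM2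
      show (F M1).2 k < (F M2).2 k' ∧ Bitf (y ((F M1).2 k)) (y ((F M2).2 k')) = bo
      rcases eq_or_lt_of_le hmle with heq | hmlt
      · rw [heq]
        exact (good _ hm1').2.2 k k' hkk' hm2'
      · have hg1 := (good _ hm1).2.1 k hm2
        have hg2 := (good _ hm1').2.1 k' hm2'
        have hDlt12 : (F M1).1 < (F M2).1 := (good _ hm1').1.2 _ hmlt
        constructor
        · have s1 : (F M1).2 k + 1 ≤
              Ordinal.bsup (q M1) (fun k'' _ => (F M1).2 k'' + 1) :=
            Ordinal.le_bsup _ k hm2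
          have s2 : Ordinal.bsup (q M1) (fun k'' _ => (F M1).2 k'' + 1) ≤
              Ordinal.bsup M2 (fun m' _ =>
                Ordinal.bsup (q m') (fun k'' _ => (F m').2 k'' + 1)) :=
            Ordinal.le_bsup _ _ hmlt
          have s3 := hg2.2
          refine lt_of_lt_of_le ?_ (s1.trans (s2.trans s3))
          rw [Ordinal.add_one_eq_succ]
          exact Order.lt_succ _
        · have hb := bit_cross (good _ hm1).1.1 (good _ hm1').1.1 hDlt12 hg1.1 hg2.1
          rwa [Bool.not_not] at hb

end SqBrAux
end SqBrAux

open SqBrAux Set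
set_option maxHeartbeats 4000000

/-- If `λ = λ^{<λ} < cf(θ)`, `χ ≤ 2^λ` and `χ → [θ]²_{2κ,2}`, then for every
ordinal `γ < λ⁺` we have `χ → (γ)²_κ`: every `κ`-coloring of pairs below `χ` has a
monochromatic set of order type `γ`. -/
theorem sqBr_imp_ordinary (l θ χ κ : Cardinal)
    (hl : l ^< l = l) (hlθ : l < θ.ord.cof)
    (hχ : χ ≤ 2 ^ l) (hbr : SqBr χ θ (2 * κ)) :
    ∀ γ : Ordinal, γ < (Order.succ l).ord →
      ∀ c : Ordinal → Ordinal → Ordinal,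
        (∀ α β : Ordinal, α < χ.ord → β < χ.ord → c α β < κ.ord) →
        ∃ ε : Ordinal, ε < κ.ord ∧ ∃ f : Ordinal → Ordinal,
          (∀ i, i < γ → f i < χ.ord) ∧
          (∀ i j, i < j → j < γ → f i < f j) ∧
          (∀ i j, i < j → j < γ → c (f i) (f j) = ε) := by
  intro γ hγ c hc
  have hθpos : 0 < θ.ord := by
    rcases eq_or_ne θ.ord 0 with h | h
    · rw [h, Ordinal.cof_zero] at hlθ
      exact absurd hlθ (not_lt.2 ((zero_le : (0:Cardinal) ≤ l)))
    · exact pos_iff_ne_zero.2 h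
  by_cases hκ : κ = 0
  · exfalso
    subst hκ
    by_cases hχ0 : χ.ord = 0
    · obtain ⟨f, hf1, _, _⟩ := hbr (fun _ _ => 0) (by
        intro α β hα _
        rw [hχ0] at hα
        exact absurd hα (not_lt_zero (a := α)))
      have := hf1 0 hθpos
      rw [hχ0] at this
      exact absurd this (not_lt_zero (a := _))
    · have hpos : 0 < χ.ord := pos_iff_ne_zero.2 hχ0
      have := hc 0 0 hpos hpos
      rw [Cardinal.ord_zero] at this
      exact absurd this (not_lt_zero (a := _))
  -- κ ≠ 0
  have hκord : 0 < κ.ord :=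
    pos_iff_ne_zero.2 (fun h => hκ (Cardinal.ord_eq_zero.1 h))
  have h2κord : 0 < (2 * κ).ord := by
    refine pos_iff_ne_zero.2 (fun h => hκ ?_)
    have := Cardinal.ord_eq_zero.1 h
    rcases mul_eq_zero.1 this with h2 | h2
    · exact absurd h2 (by exact_mod_cast Nat.succ_ne_zero 1)
    · exact h2
  obtain ⟨f0, hf01, hf02, _⟩ := hbr (fun _ _ => 0) (fun α β _ _ => h2κord)
  have hθχ : θ.ord ≤ χ.ord := by
    by_contra h
    push_neg at h
    exact absurd (lt_of_le_of_lt (id_le_of_mono hf02 χ.ord h) (hf01 χ.ord h)) (lt_irrefl _)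
  have hPθ : (Order.succ l).ord ≤ θ.ord := by
    calc (Order.succ l).ord ≤ (θ.ord.cof).ord := Cardinal.ord_le_ord.2 (Order.succ_le_of_lt hlθ)
      _ ≤ θ.ord := Ordinal.ord_cof_le θ.ord
  by_cases hl0 : ℵ₀ ≤ l
  case neg =>
    -- finite case : l ≤ 2 and γ ≤ 2
    have hlfin : l < ℵ₀ := not_le.1 hl0
    have hl2 : l ≤ 2 := by
      by_contra h23
      push_neg at h23
      obtain ⟨n, rfl⟩ := Cardinal.lt_aleph0.1 hlfin
      have hn : 3 ≤ n := by
        have : (2:ℕ) < n := by exact_mod_cast h23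
        omega
      have h1 : ((n:Cardinal)) ^ (((n-1 : ℕ)):Cardinal) ≤ (n:Cardinal) ^< (n:Cardinal) :=
        Cardinal.le_powerlt _ (by exact_mod_cast (by omega : n - 1 < n))
      have h2 : (n:Cardinal) < (n:Cardinal) ^ (((n-1:ℕ)):Cardinal) := by
        rw [Cardinal.power_natCast, ← Nat.cast_pow, Nat.cast_lt]
        calc n < n * n := by nlinarith
          _ = n ^ 2 := (sq n).symm
          _ ≤ n ^ (n-1) := Nat.pow_le_pow_right (by omega) (by omega)
      have := (h2.trans_le h1)
      rw [hl] at this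
      exact lt_irrefl _ this
    have hγ3 : γ < 3 := by
      refine lt_of_lt_of_le hγ ?_
      have hs3 : Order.succ l ≤ 3 := Order.succ_le_of_lt (lt_of_le_of_lt hl2 (by
        exact_mod_cast (by omega : (2:ℕ) < 3)))
      calc (Order.succ l).ord ≤ ((3:Cardinal)).ord := Cardinal.ord_le_ord.2 hs3
        _ = ((3:ℕ):Cardinal).ord := by norm_cast
        _ = ((3:ℕ):Ordinal) := Cardinal.ord_nat 3
        _ = 3 := by norm_cast
    have hγ2 : γ ≤ 2 := by
      have h3 : (3:Ordinal) = 2 + 1 := by norm_num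
      rw [h3] at hγ3
      exact Order.lt_add_one_iff.1 hγ3
    rcases eq_or_lt_of_le hγ2 with hγeq2 | hγlt2
    case inr =>
      have hγ1 : γ ≤ 1 := by
        have h2 : (2:Ordinal) = 1 + 1 := one_add_one_eq_two.symm
        rw [h2] at hγlt2
        exact Order.lt_add_one_iff.1 hγlt2
      rcases eq_or_lt_of_le hγ1 with hγeq1 | hγlt1
      case inr =>
        have hγ0 : γ = 0 := Ordinal.lt_one_iff_zero.1 hγlt1
        subst hγ0
        exact ⟨0, hκord, fun _ => 0,
          fun i hi => absurd hi (not_lt_zero (a := i)),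
          fun i j _ hj => absurd hj (not_lt_zero (a := j)),
          fun i j _ hj => absurd hj (not_lt_zero (a := j))⟩
      case inl =>
        subst hγeq1
        -- need χ.ord > 0
        have h0χ : 0 < χ.ord := lt_of_lt_of_le hθpos hθχ
        exact ⟨0, hκord, fun _ => 0,
          fun i _ => h0χ,
          fun i j hij hj => absurd (hij.trans_le (Ordinal.lt_one_iff_zero.1 hj ▸ le_rfl))
            (not_lt_zero (a := i)),
          fun i j hij hj => absurd (hij.trans_le (Ordinal.lt_one_iff_zero.1 hj ▸ le_rfl))
            (not_lt_zero (a := i))⟩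
    case inl =>
      subst hγeq2
      -- l ≥ 1 hence θ.ord is a limit, so χ.ord is infinite
      have hl1 : (1:Cardinal) ≤ l := by
        by_contra h
        push_neg at h
        have hl00 : l = 0 := by
          rcases eq_zero_or_pos l with h0 | h0
          · exact h0
          · exact absurd (Cardinal.one_le_iff_pos.2 h0) (not_le.2 h)
        rw [hl00, Cardinal.succ_zero, Cardinal.ord_one] at hγ
        have : (2:Ordinal) < 1 := hγ
        norm_num at this
      have hθlimit : Order.IsSuccLimit θ.ord := by
        rcases Ordinal.zero_or_succ_or_isSuccLimit θ.ord with h | ⟨a, ha⟩ | h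
        · rw [h, Ordinal.cof_zero] at hlθ
          exact absurd hlθ (not_lt.2 ((zero_le : (0:Cardinal) ≤ l)))
        · rw [← ha, Ordinal.cof_succ] at hlθ
          exact absurd hlθ (not_lt.2 hl1)
        · exact h
      have h1χ : 1 < χ.ord :=
        lt_of_lt_of_le (lt_of_lt_of_le Ordinal.one_lt_omega0
          (Ordinal.omega0_le_of_isSuccLimit hθlimit)) hθχ
      have h0χ : 0 < χ.ord := lt_trans zero_lt_one h1χ
      refine ⟨c 0 1, hc 0 1 h0χ h1χ, fun i => i, ?_, fun i j hij _ => hij, ?_⟩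
      · intro i hi
        have : i ≤ 1 := by
          have h2 : (2:Ordinal) = 1 + 1 := one_add_one_eq_two.symm
          rw [h2] at hi
          exact Order.lt_add_one_iff.1 hi
        exact lt_of_le_of_lt this h1χ
      · intro i j hij hj
        have hj1 : j = 1 := by
          have hle : j ≤ 1 := by
            have h2 : (2:Ordinal) = 1 + 1 := one_add_one_eq_two.symm
            rw [h2] at hj
            exact Order.lt_add_one_iff.1 hj
          have hge : 1 ≤ j := Order.one_le_iff_pos.2 (lt_of_le_of_lt (zero_le (a := i)) hij)
          exact le_antisymm hle hge
        have hi0 : i = 0 := Ordinal.lt_one_iff_zero.1 (hj1 ▸ hij)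
        rw [hi0, hj1]
  case pos =>
    classical
    -- build the branch injection E
    have hEemb : ∃ E : Ordinal → Ordinal → Bool,
        (∀ α ξ, l.ord ≤ ξ → E α ξ = false) ∧
        (∀ α β, α < χ.ord → β < χ.ord → α ≠ β → E α ≠ E β) := by
      have h1 : #(↥(Iio χ.ord)) ≤ #(↥(Iio l.ord) → Bool) := by
        rw [Cardinal.mk_arrow, mk_bool, Cardinal.lift_two, Ordinal.mk_Iio_ordinal,
          Ordinal.mk_Iio_ordinal, card_ord, card_ord, Cardinal.lift_lift]
        calc Cardinal.lift.{_+1} χ ≤ Cardinal.lift.{_+1} (2 ^ l) := Cardinal.lift_le.2 hχ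
          _ = 2 ^ Cardinal.lift.{_+1} l := by rw [Cardinal.lift_power, Cardinal.lift_two]
      obtain ⟨em⟩ := Cardinal.le_def _ _ |>.1 h1
      refine ⟨fun α ξ => if hα : α < χ.ord then
          (if hξ : ξ < l.ord then em ⟨α, hα⟩ ⟨ξ, hξ⟩ else false) else false, ?_, ?_⟩
      · intro α ξ hξ
        by_cases hα : α < χ.ord
        · simp [hα, not_lt.2 hξ]
        · simp [hα]
      · intro α β hα hβ hne heq
        have hsub : (⟨α, hα⟩ : ↥(Iio χ.ord)) ≠ ⟨β, hβ⟩ := by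
          intro h
          exact hne (congrArg Subtype.val h)
        obtain ⟨⟨ξ, hξ⟩, hd⟩ := Function.ne_iff.1 (em.injective.ne hsub)
        apply hd
        have h1 := congrFun heq ξ
        dsimp only at h1
        rw [dif_pos hα, dif_pos hβ] at h1
        simp only [dif_pos (show ξ < l.ord from hξ)] at h1
        exact h1
    obtain ⟨E, hEsupp, hEinj⟩ := hEemb
    set d : Ordinal → Ordinal → Ordinal := fun α β =>
      if α < χ.ord ∧ β < χ.ord ∧ α ≠ β then
        2 * c α β + (if Bitf (E α) (E β) then 1 else 0)
      else 0 with hd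
    have h20 : (2:Ordinal) ≠ 0 := by
      intro h
      exact absurd h (by exact_mod_cast Nat.succ_ne_zero 1)
    have hdbound : ∀ α β : Ordinal, α < χ.ord → β < χ.ord → d α β < (2 * κ).ord := by
      intro α β hα hβ
      rw [hd]
      dsimp only
      split_ifs with h hbit
      · calc 2 * c α β + 1 < 2 * c α β + 2 := by
              apply add_lt_add_right
              exact_mod_cast Nat.lt_succ_self 1
          _ = 2 * (c α β + 1) := by rw [mul_add, mul_one]
          _ ≤ 2 * κ.ord := by
              apply mul_le_mul_right
              rw [Ordinal.add_one_eq_succ, Order.succ_le_iff]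
              exact hc α β hα hβ
          _ ≤ (2 * κ).ord := two_mul_ord_le hκ
      · calc 2 * c α β + 0 = 2 * c α β := add_zero _
          _ < 2 * c α β + 2 := lt_add_of_pos_right _ (by exact_mod_cast Nat.succ_pos 1)
          _ = 2 * (c α β + 1) := by rw [mul_add, mul_one]
          _ ≤ 2 * κ.ord := by
              apply mul_le_mul_right
              rw [Ordinal.add_one_eq_succ, Order.succ_le_iff]
              exact hc α β hα hβ
          _ ≤ (2 * κ).ord := two_mul_ord_le hκ
      · exact h2κord
    obtain ⟨f, hf1, hf2, v₁, v₂, hv⟩ := hbr d hdbound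
    have hsuppy : ∀ i ξ, l.ord ≤ ξ → E (f i) ξ = false := fun i ξ h => hEsupp _ _ h
    have hinjy : ∀ i j, i < j → j < θ.ord → E (f i) ≠ E (f j) := by
      intro i j hij hj
      exact hEinj _ _ (hf1 i (hij.trans hj)) (hf1 j hj) (ne_of_lt (hf2 i j hij hj))
    have hdval : ∀ i j, i < j → j < θ.ord →
        d (f i) (f j) = 2 * c (f i) (f j) + (if Bitf (E (f i)) (E (f j)) then 1 else 0) := by
      intro i j hij hj
      rw [hd]
      dsimp only
      rw [if_pos ⟨hf1 i (hij.trans hj), hf1 j hj, ne_of_lt (hf2 i j hij hj)⟩]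
    have hchain : ∀ bch : Bool, ∃ i j : Ordinal, i < j ∧ j < θ.ord ∧
        Bitf (E (f i)) (E (f j)) = bch := by
      intro bch
      by_contra hcc
      push_neg at hcc
      exact no_const_bit hl0 hl hlθ hsuppy hinjy (!bch)
        (fun i j h1 h2 => bool_ne_iff.1 (hcc i j h1 h2))
    obtain ⟨it, jt, hitjt, hjtθ, hbt⟩ := hchain true
    obtain ⟨i9, j9, hi9j9, hj9θ, hbf⟩ := hchain false
    have hvt : d (f it) (f jt) = 2 * c (f it) (f jt) + 1 := by
      rw [hdval it jt hitjt hjtθ, hbt]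
      simp
    have hvf : d (f i9) (f j9) = 2 * c (f i9) (f j9) := by
      rw [hdval i9 j9 hi9j9 hj9θ, hbf]
      simp
    have hinjP : ∀ i j, i < j → j < (Order.succ l).ord → E (f i) ≠ E (f j) :=
      fun i j h1 h2 => hinjy i j h1 (lt_of_lt_of_le h2 hPθ)
    have hbigP : Big l (Iio (Order.succ l).ord) :=
      le_of_eq (by rw [Ordinal.mk_Iio_ordinal, card_ord])
    obtain ⟨g, hgZ, hgp⟩ := extract hl0 hl hsuppy hinjP γ hγ false
      (Iio (Order.succ l).ord) subset_rfl hbigP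
    refine ⟨c (f i9) (f j9), hc _ _ (hf1 _ (hi9j9.trans hj9θ)) (hf1 _ hj9θ),
      fun k => f (g k), ?_, ?_, ?_⟩
    · intro k hk
      exact hf1 _ (lt_of_lt_of_le (hgZ k hk) hPθ)
    · intro k k' hkk' hk'
      exact hf2 _ _ (hgp k k' hkk' hk').1 (lt_of_lt_of_le (hgZ k' hk') hPθ)
    · intro k k' hkk' hk'
      have hgb := hgp k k' hkk' hk'
      have hgk'θ : g k' < θ.ord := lt_of_lt_of_le (hgZ k' hk') hPθ
      have hX : d (f (g k)) (f (g k')) = 2 * c (f (g k)) (f (g k')) := by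
        rw [hdval _ _ hgb.1 hgk'θ, hgb.2]
        simp
      have hpair := hv (g k) (g k') hgb.1 hgk'θ
      rw [hX] at hpair
      have hut := hv it jt hitjt hjtθ
      rw [hvt] at hut
      have huf := hv i9 j9 hi9j9 hj9θ
      rw [hvf] at huf
      have h2eq : 2 * c (f (g k)) (f (g k')) = 2 * c (f i9) (f j9) := by
        rcases hut with hT | hT
        · rcases hpair with hP | hP
          · exact absurd (hT.trans hP.symm) (parity_ne _ _)
          · rcases huf with hF | hF
            · exact absurd (hT.trans hF.symm) (parity_ne _ _)
            · rw [hP, ← hF]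
        · rcases hpair with hP | hP
          · rcases huf with hF | hF
            · rw [hP, ← hF]
            · exact absurd (hT.trans hF.symm) (parity_ne _ _)
          · exact absurd (hT.trans hP.symm) (parity_ne _ _)
      calc c (f (g k)) (f (g k'))
          = 2 * c (f (g k)) (f (g k')) / 2 := (Ordinal.mul_div_cancel _ h20).symm
        _ = 2 * c (f i9) (f j9) / 2 := by rw [h2eq]
        _ = c (f i9) (f j9) := Ordinal.mul_div_cancel _ h20
end

section
/- Let X be a regular (T₃) Hausdorff topological space with density ≥ λ, and assume λ → (μ,(μ;μ))². Then X has a discrete subspace of size μ. -/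
open Cardinal

open Set in
lemma exists_rsep {X : Type u} [TopologicalSpace X] [Nonempty X] (l : Cardinal.{u})
    (hdens : ∀ D : Set X, Dense D → l ≤ Cardinal.mk ↥D) :
    ∃ x : Ordinal.{u} → X, ∀ α, α < l.ord → x α ∉ closure (x '' Set.Iio α) := by
  have key : ∀ (α : Ordinal.{u}), α < l.ord → ∀ f : Ordinal.{u} → X,
      ∃ p : X, p ∉ closure (f '' Set.Iio α) := by
    intro α hα f
    by_contra h
    push_neg at h
    have hd : Dense (f '' Set.Iio α) := fun p => h p
    have h1 : l ≤ Cardinal.mk ↥(f '' Set.Iio α) := hdens _ hd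
    have h2 := mk_image_le_lift (f := f) (s := Set.Iio α)
    rw [Ordinal.mk_Iio_ordinal] at h2
    have h3 : Cardinal.mk ↥(f '' Set.Iio α) ≤ α.card := by
      rw [Cardinal.lift_lift] at h2
      exact Cardinal.lift_le.1 h2
    exact absurd (Cardinal.lt_ord.1 hα) (not_lt.2 (h1.trans h3))
  let F : (α : Ordinal.{u}) → ((β : Ordinal.{u}) → β < α → X) → X := fun α ih =>
    if h : α < l.ord then
      Classical.choose (key α h (fun β => if hβ : β < α then ih β hβ else Classical.arbitrary X))
    else Classical.arbitrary X
  let x : Ordinal.{u} → X := Ordinal.lt_wf.fix F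
  refine ⟨x, fun α hα => ?_⟩
  have hfix : x α = F α (fun β _ => x β) := Ordinal.lt_wf.fix_eq F α
  have hbody : x α = Classical.choose
      (key α hα (fun β => if hβ : β < α then x β else Classical.arbitrary X)) := by
    rw [hfix]
    simp only [F, dif_pos hα]
  have hspec := Classical.choose_spec
      (key α hα (fun β => if hβ : β < α then x β else Classical.arbitrary X))
  rw [← hbody] at hspec
  have himg : (fun β => if hβ : β < α then x β else Classical.arbitrary X) '' Set.Iio α
      = x '' Set.Iio α := by
    apply Set.image_congr
    intro β hβ
    simp [Set.mem_Iio.1 hβ]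
  rwa [himg] at hspec

/-- If `X` is a regular Hausdorff (T₃) space of density `≥ λ` and
`λ → (μ,(μ;μ))²` holds, then `X` has a discrete subspace of size `μ`. -/
theorem discrete_of_density {X : Type*} [TopologicalSpace X] [T3Space X]
    (l μ : Cardinal)
    (hdens : ∀ D : Set X, Dense D → l ≤ Cardinal.mk ↥D)
    (hpart : ArrowMixed l μ.ord 1) :
    ∃ D : Set X, Cardinal.mk ↥D = μ ∧
      ∀ x ∈ D, ∃ U : Set X, IsOpen U ∧ x ∈ U ∧ U ∩ D = {x} := by
  have hord1 : (1 : Cardinal).ord = 1 := Cardinal.ord_one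
  have h0lt : (0 : Ordinal) < 1 + (1 : Cardinal).ord :=
    lt_of_lt_of_le (zero_lt_one : (0 : Ordinal) < 1) (le_self_add)
  have h1lt : (1 : Ordinal) < 1 + (1 : Cardinal).ord := by
    rw [hord1]
    exact lt_of_eq_of_lt (add_zero 1).symm ((add_lt_add_iff_left (1 : Ordinal)).2 zero_lt_one)
  rcases eq_or_ne μ 0 with hμ0 | hμ0
  · exact ⟨∅, by simp [hμ0], by simp⟩
  have hμord : (0 : Ordinal) < μ.ord := by
    rw [pos_iff_ne_zero]
    simpa [Cardinal.ord_eq_zero] using hμ0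
  cases isEmpty_or_nonempty X with
  | inl hE =>
    exfalso
    have hl0 : l = 0 := by
      have hd : Dense (∅ : Set X) := fun p => (IsEmpty.false p).elim
      simpa using hdens ∅ hd
    obtain ⟨ε, hε, a, b, hab, -, -⟩ := hpart (fun _ _ => 0) (fun _ _ _ _ => h0lt)
    have := (hab 0 hμord).2
    rw [hl0, Cardinal.ord_zero] at this
    exact not_lt_zero this
  | inr hne =>
    classical
    obtain ⟨x, hrs⟩ := exists_rsep l hdens
    have hVex : ∀ α : Ordinal, ∃ V : Set X, α < l.ord →
        IsOpen V ∧ x α ∈ V ∧ Disjoint (closure V) (closure (x '' Set.Iio α)) := by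
      intro α
      by_cases hα : α < l.ord
      · obtain ⟨t, ht, htc, hts⟩ := exists_mem_nhds_isClosed_subset
          ((isClosed_closure (s := x '' Set.Iio α)).isOpen_compl.mem_nhds (hrs α hα))
        refine ⟨interior t, fun _ => ⟨isOpen_interior, mem_interior_iff_mem_nhds.2 ht, ?_⟩⟩
        have hsub : closure (interior t) ⊆ (closure (x '' Set.Iio α))ᶜ := by
          calc closure (interior t) ⊆ closure t := closure_mono interior_subset
            _ = t := htc.closure_eq
            _ ⊆ _ := hts
        exact Set.disjoint_left.2 fun p hp hpC => hsub hp hpC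
      · exact ⟨∅, fun h => absurd h hα⟩
    choose V hV using hVex
    -- basic facts
    have hlow : ∀ β γ : Ordinal, β < γ → γ < l.ord → x β ∉ closure (V γ) := by
      intro β γ hβγ hγ hmem
      exact Set.disjoint_left.1 (hV γ hγ).2.2 hmem
        (subset_closure (Set.mem_image_of_mem x hβγ))
    set c : Ordinal → Ordinal → Ordinal :=
      fun α β => if x β ∈ closure (V α) then 1 else 0 with hc_def
    have hbound : ∀ α β : Ordinal, α < l.ord → β < l.ord → c α β < 1 + (1 : Cardinal).ord := by
      intro α β _ _
      by_cases h : x β ∈ closure (V α) <;> simp [hc_def, h, h0lt, h1lt]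
    obtain ⟨ε, hε, a, b, hab, hsep, hcase⟩ := hpart c hbound
    have haL : ∀ i, i < μ.ord → a i < l.ord := fun i hi => (hab i hi).1.trans (hab i hi).2
    have hbL : ∀ i, i < μ.ord → b i < l.ord := fun i hi => (hab i hi).2
    rcases hcase with ⟨hε0, hc⟩ | ⟨hε1, hc⟩
    · -- homogeneous 0 case: D = x ∘ a
      have notin : ∀ i j, i < j → j < μ.ord → x (a j) ∉ closure (V (a i)) := by
        intro i j hij hj hmem
        have := hc i j hij hj
        simp only [hc_def, if_pos hmem] at this
        exact one_ne_zero this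
      have hinj : Set.InjOn (fun i => x (a i)) (Set.Iio μ.ord) := by
        intro i hi j hj hxe
        have hxe' : x (a i) = x (a j) := hxe
        by_contra hne
        rcases lt_or_gt_of_ne hne with h | h
        · exact notin i j h hj (hxe' ▸ subset_closure (hV (a i) (haL i hi)).2.1)
        · exact notin j i h hi (hxe'.symm ▸ subset_closure (hV (a j) (haL j hj)).2.1)
      refine ⟨(fun i => x (a i)) '' Set.Iio μ.ord, ?_, ?_⟩
      · have := mk_image_eq_of_injOn_lift _ _ hinj
        rw [Ordinal.mk_Iio_ordinal, Cardinal.lift_lift, card_ord] at this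
        exact Cardinal.lift_inj.1 this
      · rintro p ⟨i, hi, rfl⟩
        refine ⟨V (a i), (hV (a i) (haL i hi)).1, (hV (a i) (haL i hi)).2.1, ?_⟩
        ext q
        constructor
        · rintro ⟨hqV, j, hj, rfl⟩
          rcases lt_trichotomy i j with h | h | h
          · exact absurd (subset_closure hqV) (notin i j h hj)
          · simp [h]
          · have haa : a j < a i := (hab j hj).1.trans (hsep j i h hi)
            exact absurd (subset_closure hqV) (hlow (a j) (a i) haa (haL i hi))
        · rintro rfl
          exact ⟨(hV (a i) (haL i hi)).2.1, Set.mem_image_of_mem _ hi⟩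
    · -- homogeneous 1 case: D = x ∘ b
      have hε2 : ε = 1 := by
        rw [hord1, ← Order.succ_eq_add_one, Order.lt_succ_iff] at hε
        exact le_antisymm hε hε1
      have hmem : ∀ i j, i ≤ j → j < μ.ord → x (b j) ∈ closure (V (a i)) := by
        intro i j hij hj
        have := hc i j hij hj
        rw [hε2] at this
        by_contra hmem
        simp only [hc_def, if_neg hmem] at this
        exact one_ne_zero this.symm
      have hinj : Set.InjOn (fun j => x (b j)) (Set.Iio μ.ord) := by
        have key : ∀ i j, i < j → j < μ.ord → x (b i) ≠ x (b j) := by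
          intro i j hij hj hxe
          have h1 : x (b j) ∈ closure (V (a j)) := hmem j j le_rfl hj
          have h2 : x (b i) ∉ closure (V (a j)) :=
            hlow (b i) (a j) (hsep i j hij hj) (haL j hj)
          exact h2 (hxe ▸ h1)
        intro i hi j hj hxe
        have hxe' : x (b i) = x (b j) := hxe
        by_contra hne
        rcases lt_or_gt_of_ne hne with h | h
        · exact key i j h hj hxe'
        · exact key j i h hi hxe'.symm
      refine ⟨(fun j => x (b j)) '' Set.Iio μ.ord, ?_, ?_⟩
      · have := mk_image_eq_of_injOn_lift _ _ hinj
        rw [Ordinal.mk_Iio_ordinal, Cardinal.lift_lift, card_ord] at this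
        exact Cardinal.lift_inj.1 this
      · rintro p ⟨j, hj, rfl⟩
        have hjj1 : j < j + 1 := by
          rw [← Order.succ_eq_add_one]; exact Order.lt_succ j
        have hself : x (b j) ∉ closure (x '' Set.Iio (b j)) := hrs (b j) (hbL j hj)
        by_cases hsucc : j + 1 < μ.ord
        · refine ⟨(closure (x '' Set.Iio (b j)))ᶜ ∩ (closure (V (a (j + 1))))ᶜ,
            (isClosed_closure.isOpen_compl).inter isClosed_closure.isOpen_compl,
            ⟨hself, hlow (b j) (a (j + 1)) (hsep j (j + 1) hjj1 hsucc) (haL _ hsucc)⟩, ?_⟩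
          ext q
          constructor
          · rintro ⟨⟨hq1, hq2⟩, j', hj', rfl⟩
            rcases lt_trichotomy j j' with h | h | h
            · have : j + 1 ≤ j' := by
                rw [← Order.succ_eq_add_one]; exact Order.succ_le_of_lt h
              exact absurd (hmem (j + 1) j' this hj') hq2
            · simp [h]
            · have hbb : b j' < b j := (hsep j' j h hj).trans (hab j hj).1
              exact absurd (subset_closure (Set.mem_image_of_mem x hbb)) hq1
          · rintro rfl
            exact ⟨⟨hself, hlow (b j) (a (j + 1)) (hsep j (j + 1) hjj1 hsucc) (haL _ hsucc)⟩,
              Set.mem_image_of_mem _ hj⟩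
        · refine ⟨(closure (x '' Set.Iio (b j)))ᶜ, isClosed_closure.isOpen_compl, hself, ?_⟩
          ext q
          constructor
          · rintro ⟨hq1, j', hj', rfl⟩
            rcases lt_trichotomy j j' with h | h | h
            · exfalso
              have : j + 1 ≤ j' := by
                rw [← Order.succ_eq_add_one]; exact Order.succ_le_of_lt h
              exact hsucc (lt_of_le_of_lt this hj')
            · simp [h]
            · have hbb : b j' < b j := (hsep j' j h hj).trans (hab j hj).1
              exact absurd (subset_closure (Set.mem_image_of_mem x hbb)) hq1
          · rintro rfl
            exact ⟨hself, Set.mem_image_of_mem _ hj⟩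
end

section
/- Let X be a regular (T₃) Hausdorff space, and suppose there exist points x_α ∈ X and open sets U_α with x_α ∈ U_α for α < λ such that x_β ∉ U_α whenever α < β < λ. If λ → (μ,(μ;μ))² holds, then X has a discrete subspace of size μ. -/
open Cardinal

/-- If `X` is a regular Hausdorff (T₃) space with a right-separated sequence of
length `λ` (witnessing `hL⁺(X) > λ`) and `λ → (μ,(μ;μ))²` holds, then `X` has a
discrete subspace of size `μ`. -/
theorem discrete_of_rightSeparated {X : Type*} [TopologicalSpace X] [T3Space X]
    (l μ : Cardinal) (x : Ordinal → X) (U : Ordinal → Set X)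
    (hU : ∀ α, α < l.ord → IsOpen (U α) ∧ x α ∈ U α)
    (hsep : ∀ α β, α < β → β < l.ord → x β ∉ U α)
    (hpart : ArrowMixed l μ.ord 1) :
    ∃ D : Set X, Cardinal.mk ↥D = μ ∧
      ∀ y ∈ D, ∃ V : Set X, IsOpen V ∧ y ∈ V ∧ V ∩ D = {y} := by
  classical
  rcases eq_or_ne μ 0 with rfl | hμ0
  · exact ⟨∅, by simp, by simp⟩
  -- choose regular neighborhoods
  have hVex : ∀ α, ∃ V : Set X, α < l.ord →
      IsOpen V ∧ x α ∈ V ∧ closure V ⊆ U α := by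
    intro α
    by_cases hα : α < l.ord
    · obtain ⟨hUo, hxU⟩ := hU α hα
      obtain ⟨t, ht, htc, hts⟩ := exists_mem_nhds_isClosed_subset (hUo.mem_nhds hxU)
      exact ⟨interior t, fun _ => ⟨isOpen_interior, mem_interior_iff_mem_nhds.2 ht,
        (closure_minimal interior_subset htc).trans hts⟩⟩
    · exact ⟨∅, fun h => absurd h hα⟩
  choose Vc hVc using hVex
  set o := μ.ord with ho_def
  have ho0 : 0 < o := by
    rcases eq_zero_or_pos o with h | h
    · exfalso
      apply hμ0
      rw [← Cardinal.card_ord μ, ← ho_def, h, Ordinal.card_zero]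
    · exact h
  -- the coloring
  set c : Ordinal → Ordinal → Ordinal :=
    fun α β => if x α ∈ closure (Vc β) then 1 else 0 with hc_def
  have hcbound : ∀ α β : Ordinal, α < l.ord → β < l.ord → c α β < 1 + (1 : Cardinal).ord := by
    intro α β _ _
    have h1 : (1 : Cardinal).ord = 1 := by simp
    rw [h1]
    by_cases h : x α ∈ closure (Vc β)
    · simp only [hc_def, if_pos h]
      exact lt_of_lt_of_le (Order.lt_succ 1) (by rw [← Ordinal.add_one_eq_succ])
    · simp only [hc_def, if_neg h]
      have : (0 : Ordinal) < 1 := zero_lt_one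
      exact this.trans_le (le_self_add)
  obtain ⟨ε, hε, a, b, hab1, hab2, hcase⟩ := hpart c hcbound
  have hal : ∀ i, i < o → a i < l.ord := fun i hi =>
    lt_trans (hab1 i hi).1 (hab1 i hi).2
  have amono : ∀ i j, i < j → j < o → a i < a j := fun i j hij hj =>
    lt_trans (hab1 i (lt_trans hij hj)).1 (hab2 i j hij hj)
  have hxne : ∀ i j, i < j → j < o → x (a i) ≠ x (a j) := by
    intro i j hij hj heq
    exact hsep (a i) (a j) (amono i j hij hj) (hal j hj)
      (heq ▸ (hU (a i) (hal i (lt_trans hij hj))).2)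
  rcases hcase with ⟨-, h0⟩ | ⟨hε1, h1⟩
  · -- case ε = 0 : x (a i) ∉ closure (Vc (a j)) for i < j
    have key : ∀ i j, i < j → j < o → x (a i) ∉ closure (Vc (a j)) := by
      intro i j hij hj hmem
      have := h0 i j hij hj
      simp only [hc_def, if_pos hmem] at this
      exact one_ne_zero this
    set g : o.ToType → X := fun t => x (a ((Ordinal.ToType.mk (o := o)).symm t).1) with hg_def
    have hkin : ∀ t : o.ToType, ((Ordinal.ToType.mk (o := o)).symm t).1 < o := fun t =>
      ((Ordinal.ToType.mk (o := o)).symm t).2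
    have hginj : Function.Injective g := by
      intro t t' heq
      have hkk' : ((Ordinal.ToType.mk (o := o)).symm t).1
          = ((Ordinal.ToType.mk (o := o)).symm t').1 := by
        rcases lt_trichotomy ((Ordinal.ToType.mk (o := o)).symm t).1
            ((Ordinal.ToType.mk (o := o)).symm t').1 with h | h | h
        · exact absurd heq (hxne _ _ h (hkin t'))
        · exact h
        · exact absurd heq.symm (hxne _ _ h (hkin t))
      exact (Ordinal.ToType.mk (o := o)).symm.injective (Subtype.ext hkk')
    refine ⟨Set.range g, ?_, ?_⟩
    · rw [Cardinal.mk_range_eq g hginj, Cardinal.mk_toType, Cardinal.card_ord]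
    · rintro y ⟨t, rfl⟩
      obtain ⟨hVo, hVm, hVs⟩ := hVc (a ((Ordinal.ToType.mk (o := o)).symm t).1)
        (hal _ (hkin t))
      refine ⟨Vc (a ((Ordinal.ToType.mk (o := o)).symm t).1), hVo, hVm, ?_⟩
      ext z
      constructor
      · rintro ⟨hzV, t', rfl⟩
        rcases lt_trichotomy ((Ordinal.ToType.mk (o := o)).symm t').1
            ((Ordinal.ToType.mk (o := o)).symm t).1 with h | h | h
        · exact absurd (subset_closure hzV) (key _ _ h (hkin t))
        · have : t' = t := (Ordinal.ToType.mk (o := o)).symm.injective (Subtype.ext h)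
          simp [hg_def, this]
        · exact absurd (hVs (subset_closure hzV))
            (hsep _ _ (amono _ _ h (hkin t')) (hal _ (hkin t')))
      · rintro rfl
        exact ⟨hVm, ⟨t, rfl⟩⟩
  · -- case ε ≥ 1 : x (a i) ∈ closure (Vc (b j)) for i ≤ j
    have key : ∀ i j, i ≤ j → j < o → x (a i) ∈ closure (Vc (b j)) := by
      intro i j hij hj
      by_contra hmem
      have := h1 i j hij hj
      simp only [hc_def, if_neg hmem] at this
      rw [← this] at hε1
      exact absurd hε1 (by simp)
    set φ : Ordinal → Ordinal := fun k => if k + 1 < o then k + 1 else 0 with hφ_def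
    have hφlt : ∀ k, k < o → φ k < o := by
      intro k hk
      by_cases h : k + 1 < o
      · simp only [hφ_def, if_pos h]; exact h
      · simp only [hφ_def, if_neg h]; exact ho0
    have hsucc_ne : ∀ k : Ordinal, k + 1 ≠ 0 := by
      intro k hk
      exact absurd hk (by rw [Ordinal.add_one_eq_succ]; exact (Order.succ_ne_bot k))
    have hφinj : ∀ k k', k < o → k' < o → φ k = φ k' → k = k' := by
      intro k k' hk hk' heq
      by_cases h : k + 1 < o <;> by_cases h' : k' + 1 < o
      · simp only [hφ_def, if_pos h, if_pos h'] at heq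
        rw [Ordinal.add_one_eq_succ, Ordinal.add_one_eq_succ] at heq
        exact Order.succ_injective heq
      · simp only [hφ_def, if_pos h, if_neg h'] at heq
        exact absurd heq (hsucc_ne k)
      · simp only [hφ_def, if_neg h, if_pos h'] at heq
        exact absurd heq.symm (hsucc_ne k')
      · have hk1 : k ≤ k' := by
          have h2 : k < k' + 1 := lt_of_lt_of_le hk (le_of_not_gt h')
          rw [Ordinal.add_one_eq_succ] at h2
          exact Order.lt_succ_iff.mp h2
        have hk2 : k' ≤ k := by
          have h2 : k' < k + 1 := lt_of_lt_of_le hk' (le_of_not_gt h)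
          rw [Ordinal.add_one_eq_succ] at h2
          exact Order.lt_succ_iff.mp h2
        exact le_antisymm hk1 hk2
    set g : o.ToType → X := fun t => x (a (φ ((Ordinal.ToType.mk (o := o)).symm t).1))
      with hg_def
    have hkin : ∀ t : o.ToType, ((Ordinal.ToType.mk (o := o)).symm t).1 < o := fun t =>
      ((Ordinal.ToType.mk (o := o)).symm t).2
    have hφtlt : ∀ t : o.ToType, φ ((Ordinal.ToType.mk (o := o)).symm t).1 < o := fun t =>
      hφlt _ (hkin t)
    have hginj : Function.Injective g := by
      intro t t' heq
      have hkk' : φ ((Ordinal.ToType.mk (o := o)).symm t).1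
          = φ ((Ordinal.ToType.mk (o := o)).symm t').1 := by
        rcases lt_trichotomy (φ ((Ordinal.ToType.mk (o := o)).symm t).1)
            (φ ((Ordinal.ToType.mk (o := o)).symm t').1) with h | h | h
        · exact absurd heq (hxne _ _ h (hφtlt t'))
        · exact h
        · exact absurd heq.symm (hxne _ _ h (hφtlt t))
      exact (Ordinal.ToType.mk (o := o)).symm.injective
        (Subtype.ext (hφinj _ _ (hkin t) (hkin t') hkk'))
    refine ⟨Set.range g, ?_, ?_⟩
    · rw [Cardinal.mk_range_eq g hginj, Cardinal.mk_toType, Cardinal.card_ord]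
    · rintro y ⟨t, rfl⟩
      set k := ((Ordinal.ToType.mk (o := o)).symm t).1 with hk_def
      by_cases hks : k + 1 < o
      · -- φ k = k + 1 ; neighborhood is U (a (k+1)) \ closure (Vc (b k))
        have hφk : φ k = k + 1 := by simp only [hφ_def, if_pos hks]
        have hbk : b k < a (k + 1) := hab2 k (k + 1) (by
          rw [Ordinal.add_one_eq_succ]; exact Order.lt_succ k) hks
        have halk : a (k + 1) < l.ord := hal _ hks
        have hblk : b k < l.ord := (hab1 k (hkin t)).2
        obtain ⟨hVo, hVm, hVs⟩ := hVc (b k) hblk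
        refine ⟨U (a (k + 1)) \ closure (Vc (b k)),
          (hU _ halk).1.sdiff isClosed_closure, ?_, ?_⟩
        · constructor
          · simp only [hg_def, ← hk_def, hφk]
            exact (hU _ halk).2
          · simp only [hg_def, ← hk_def, hφk]
            intro hmem
            exact hsep (b k) (a (k + 1)) hbk halk (hVs hmem)
        · ext z
          constructor
          · rintro ⟨⟨hzU, hzV⟩, t', rfl⟩
            set k' := ((Ordinal.ToType.mk (o := o)).symm t').1 with hk'_def
            rcases lt_trichotomy (φ k') (φ k) with h | h | h
            · -- φ k' < φ k = k + 1, so φ k' ≤ k and x (a (φ k')) ∈ closure (Vc (b k))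
              exfalso
              apply hzV
              have hle : φ k' ≤ k := by
                rw [hφk, Ordinal.add_one_eq_succ] at h
                exact Order.lt_succ_iff.mp h
              exact key (φ k') k hle (hkin t)
            · have : t' = t := (Ordinal.ToType.mk (o := o)).symm.injective
                (Subtype.ext (hφinj _ _ (hkin t') (hkin t) h))
              simp [hg_def, this]
            · exfalso
              rw [hφk] at h
              exact hsep _ _ (amono _ _ h (hφtlt t')) (hal _ (hφtlt t')) hzU
          · rintro rfl
            refine ⟨⟨?_, ?_⟩, ⟨t, rfl⟩⟩
            · simp only [hg_def, ← hk_def, hφk]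
              exact (hU _ halk).2
            · simp only [hg_def, ← hk_def, hφk]
              intro hmem
              exact hsep (b k) (a (k + 1)) hbk halk (hVs hmem)
      · -- φ k = 0 ; neighborhood is U (a 0)
        have hφk : φ k = 0 := by simp only [hφ_def, if_neg hks]
        have hal0 : a 0 < l.ord := hal 0 ho0
        refine ⟨U (a 0), (hU _ hal0).1, ?_, ?_⟩
        · simp only [hg_def, ← hk_def, hφk]
          exact (hU _ hal0).2
        · ext z
          constructor
          · rintro ⟨hzU, t', rfl⟩
            set k' := ((Ordinal.ToType.mk (o := o)).symm t').1 with hk'_def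
            rcases eq_or_ne (φ k') 0 with h | h
            · have : t' = t := (Ordinal.ToType.mk (o := o)).symm.injective
                (Subtype.ext (hφinj _ _ (hkin t') (hkin t) (h.trans hφk.symm)))
              simp [hg_def, this]
            · exfalso
              have hpos : 0 < φ k' := pos_iff_ne_zero.mpr h
              exact hsep (a 0) (a (φ k')) (amono 0 (φ k') hpos (hφtlt t'))
                (hal _ (hφtlt t')) hzU
          · rintro rfl
            exact ⟨by simp only [hg_def, ← hk_def, hφk]; exact (hU _ hal0).2, ⟨t, rfl⟩⟩
end

section
/- In the forcing Q_p: if κ ∈ Θ, p ≤^ap_κ q, and p ≤^pr_κ r, then q ∪ r is a well-defined function in Q, it is a least upper bound of q and r, and moreover q ≤^pr_κ (q ∪ r) and r ≤^ap_κ (q ∪ r). -/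
open Cardinal

/-- The domain of a condition (a partial function `μ ⇀ {0,1}` coded as an
`Option Bool`-valued function). -/
def Dom (q : Ordinal.{0} → Option Bool) : Set Ordinal.{0} := {i | q i ≠ none}

/-- The `E_κ`-equivalence class of `i`, where `i E_κ j ↔ i + κ = j + κ`. -/
def Cls (κ : Cardinal.{0}) (i : Ordinal.{0}) : Set Ordinal.{0} :=
  {j | j + κ.ord = i + κ.ord}

/-- Membership in the forcing `Q`: a partial function from `μ` to `{0,1}` whose
domain meets each `E_κ`-class (`κ ∈ Θ`) in fewer than `∂_κ` points. -/
def InQ (μ : Cardinal.{0}) (Θ : Set Cardinal.{0}) (d : Cardinal.{0} → Cardinal.{0})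
    (q : Ordinal.{0} → Option Bool) : Prop :=
  (∀ i, q i ≠ none → i < μ.ord) ∧
  ∀ κ ∈ Θ, ∀ i : Ordinal.{0}, i < μ.ord →
    Cardinal.mk ↥(Cls κ i ∩ Dom q) < Cardinal.lift.{1} (d κ)

/-- The `E_κ`-class `C` grows from `p` to `q`:
`∅ ≠ C ∩ dom(p) ≠ C ∩ dom(q)`. -/
def Grows (κ : Cardinal.{0}) (p q : Ordinal.{0} → Option Bool)
    (C : Set Ordinal.{0}) : Prop :=
  (∃ i : Ordinal.{0}, C = Cls κ i) ∧ (C ∩ Dom p).Nonempty ∧ C ∩ Dom p ≠ C ∩ Dom q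

/-- The order on `Q`: `p ≤ q` iff `p ⊆ q` and for every `θ ∈ Θ` fewer than
`∂_θ` many `E_θ`-classes grow from `p` to `q`. -/
def QLe (Θ : Set Cardinal.{0}) (d : Cardinal.{0} → Cardinal.{0})
    (p q : Ordinal.{0} → Option Bool) : Prop :=
  (∀ i, p i ≠ none → q i = p i) ∧
  ∀ θ ∈ Θ, Cardinal.mk ↥{C : Set Ordinal.{0} | Grows θ p q C} <
    Cardinal.lift.{1} (d θ)

/-- The pure order: `p ≤^pr_κ q` iff `p ≤ q` and no `E_κ`-class grows from `p`
to `q`. -/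
def QLePr (Θ : Set Cardinal.{0}) (d : Cardinal.{0} → Cardinal.{0}) (κ : Cardinal.{0})
    (p q : Ordinal.{0} → Option Bool) : Prop :=
  QLe Θ d p q ∧ ∀ C : Set Ordinal.{0}, ¬ Grows κ p q C

/-- The apure order: `p ≤^ap_κ q` iff `p ≤ q` and `dom(q)` meets exactly the same
`E_κ`-classes as `dom(p)`. -/
def QLeAp (Θ : Set Cardinal.{0}) (d : Cardinal.{0} → Cardinal.{0}) (κ : Cardinal.{0})
    (p q : Ordinal.{0} → Option Bool) : Prop :=
  QLe Θ d p q ∧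
  ∀ i : Ordinal.{0}, (Cls κ i ∩ Dom p).Nonempty ↔ (Cls κ i ∩ Dom q).Nonempty

/-- The union of two conditions (as partial functions). -/
def UnionQ (p q : Ordinal.{0} → Option Bool) : Ordinal.{0} → Option Bool :=
  fun i => (p i).orElse (fun _ => q i)

lemma mem_cls_self (κ : Cardinal.{0}) (x : Ordinal.{0}) : x ∈ Cls κ x := rfl

lemma cls_eq_of_mem {κ : Cardinal.{0}} {x y : Ordinal.{0}} (h : y ∈ Cls κ x) :
    Cls κ y = Cls κ x := by
  have h' : y + κ.ord = x + κ.ord := h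
  ext z
  simp only [Cls, Set.mem_setOf_eq, h']

lemma cls_subset_cls {θ κ : Cardinal.{0}} (hκ : ℵ₀ ≤ κ) (h : θ ≤ κ) (x : Ordinal.{0}) :
    Cls θ x ⊆ Cls κ x := by
  rcases h.lt_or_eq with hlt | rfl
  · have habs : θ.ord + κ.ord = κ.ord :=
      (Ordinal.principal_add_iff_add_left_eq_self.mp (Ordinal.isPrincipal_add_ord hκ)) _
        (Cardinal.ord_lt_ord.mpr hlt)
    intro y hy
    have hy' : y + θ.ord = x + θ.ord := hy
    show y + κ.ord = x + κ.ord
    rw [← habs, ← add_assoc, ← add_assoc, hy']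
  · exact subset_rfl


/-- If `κ ∈ Θ`, `p ≤^ap_κ q` and `p ≤^pr_κ r`, then `q ∪ r` is a
well-defined function in `Q`, a least upper bound of `q` and `r`, and
moreover `q ≤^pr_κ (q ∪ r)` and `r ≤^ap_κ (q ∪ r)`. -/
theorem ap_pr_union
    (l μ : Cardinal.{0}) (Θ : Set Cardinal.{0}) (d : Cardinal.{0} → Cardinal.{0})
    (hl : l.IsRegular) (hμ : μ.IsRegular) (hlμ : l < μ)
    (hΘ : Θ ⊆ {c : Cardinal.{0} | c.IsRegular ∧ l ≤ c ∧ c ≤ μ})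
    (hlΘ : l ∈ Θ) (hμΘ : μ ∈ Θ)
    (hd : ∀ θ ∈ Θ, (d θ).IsRegular ∧ d θ ≤ θ)
    (κ : Cardinal.{0}) (hκΘ : κ ∈ Θ)
    (p q r : Ordinal.{0} → Option Bool)
    (hp : InQ μ Θ d p) (hq : InQ μ Θ d q) (hr : InQ μ Θ d r)
    (hap : QLeAp Θ d κ p q) (hpr : QLePr Θ d κ p r) :
    (∀ i, q i ≠ none → r i ≠ none → q i = r i) ∧
    InQ μ Θ d (UnionQ q r) ∧
    QLe Θ d q (UnionQ q r) ∧ QLe Θ d r (UnionQ q r) ∧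
    (∀ t, InQ μ Θ d t → QLe Θ d q t → QLe Θ d r t → QLe Θ d (UnionQ q r) t) ∧
    QLePr Θ d κ q (UnionQ q r) ∧ QLeAp Θ d κ r (UnionQ q r) := by
  obtain ⟨⟨hpq_sub, hpq_cnt⟩, hap2⟩ := hap
  obtain ⟨⟨hpr_sub, hpr_cnt⟩, hpr2⟩ := hpr
  have hκinf : ℵ₀ ≤ κ := (hΘ hκΘ).1.aleph0_le
  have hdpq : Dom p ⊆ Dom q := by
    intro i hi
    have : q i = p i := hpq_sub i hi
    simp only [Dom, Set.mem_setOf_eq] at hi ⊢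
    rw [this]; exact hi
  have hdpr : Dom p ⊆ Dom r := by
    intro i hi
    have : r i = p i := hpr_sub i hi
    simp only [Dom, Set.mem_setOf_eq] at hi ⊢
    rw [this]; exact hi
  have key_q : ∀ i, (Cls κ i ∩ Dom q).Nonempty → (Cls κ i ∩ Dom p).Nonempty :=
    fun i => (hap2 i).mpr
  have key_r : ∀ i, (Cls κ i ∩ Dom p).Nonempty → Cls κ i ∩ Dom r = Cls κ i ∩ Dom p := by
    intro i hne
    by_contra h
    exact hpr2 (Cls κ i) ⟨⟨i, rfl⟩, hne, fun e => h e.symm⟩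
  have mem_p : ∀ i, q i ≠ none → r i ≠ none → p i ≠ none := by
    intro i hqi hri
    have h1 : (Cls κ i ∩ Dom p).Nonempty := key_q i ⟨i, mem_cls_self κ i, hqi⟩
    have h2 := key_r i h1
    have h3 : i ∈ Cls κ i ∩ Dom r := ⟨mem_cls_self κ i, hri⟩
    rw [h2] at h3
    exact h3.2
  have compat : ∀ i, q i ≠ none → r i ≠ none → q i = r i := by
    intro i hqi hri
    rw [hpq_sub i (mem_p i hqi hri), hpr_sub i (mem_p i hqi hri)]
  have hu_q : ∀ i, q i ≠ none → UnionQ q r i = q i := by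
    intro i hqi
    cases h : q i with
    | none => exact absurd h hqi
    | some b => simp [UnionQ, h]
  have hu_r : ∀ i, r i ≠ none → UnionQ q r i = r i := by
    intro i hri
    cases h : q i with
    | none => simp [UnionQ, h]
    | some b =>
      rw [hu_q i (by simp [h]), ← compat i (by simp [h]) hri]
  have dom_u : Dom (UnionQ q r) = Dom q ∪ Dom r := by
    ext i
    simp only [Dom, Set.mem_setOf_eq, Set.mem_union, UnionQ]
    cases h : q i <;> simp [h]
  have hdq_u : Dom q ⊆ Dom (UnionQ q r) := by rw [dom_u]; exact Set.subset_union_left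
  have hdr_u : Dom r ⊆ Dom (UnionQ q r) := by rw [dom_u]; exact Set.subset_union_right
  -- growth transfer lemmas
  have grow_q : ∀ θ ∈ Θ, ∀ C, Grows θ q (UnionQ q r) C → Grows θ p r C := by
    rintro θ hθ C ⟨⟨i, rfl⟩, hne, hneq⟩
    have hθinf : ℵ₀ ≤ θ := (hΘ hθ).1.aleph0_le
    obtain ⟨y, hyu, hyq'⟩ := Set.exists_of_ssubset
      (ssubset_of_subset_of_ne (Set.inter_subset_inter_right _ hdq_u) hneq)
    have hyC : y ∈ Cls θ i := hyu.1
    have hynq : y ∉ Dom q := fun h => hyq' ⟨hyC, h⟩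
    have hyr : y ∈ Dom r := by
      have h2 := hyu.2
      rw [dom_u] at h2
      rcases h2 with h | h
      · exact absurd h hynq
      · exact h
    have hynp : y ∉ Dom p := fun h => hynq (hdpq h)
    obtain ⟨x, hxC, hxq⟩ := hne
    obtain ⟨z, hzx, hzp⟩ := key_q x ⟨x, mem_cls_self κ x, hxq⟩
    rcases le_total θ κ with hle | hle
    · exfalso
      have hClsEq : Cls κ x = Cls κ i := cls_eq_of_mem (cls_subset_cls hκinf hle i hxC)
      have hyx : y ∈ Cls κ x := by rw [hClsEq]; exact cls_subset_cls hκinf hle i hyC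
      have hkr := key_r x ⟨z, hzx, hzp⟩
      have hmem : y ∈ Cls κ x ∩ Dom p := by rw [← hkr]; exact ⟨hyx, hyr⟩
      exact hynp hmem.2
    · have hzθ : z ∈ Cls θ i := by
        have h1 : z ∈ Cls θ x := cls_subset_cls hθinf hle x hzx
        rwa [cls_eq_of_mem hxC] at h1
      refine ⟨⟨i, rfl⟩, ⟨z, hzθ, hzp⟩, fun hEq => ?_⟩
      have hmem : y ∈ Cls θ i ∩ Dom p := by rw [hEq]; exact ⟨hyC, hyr⟩
      exact hynp hmem.2
  have grow_r : ∀ θ ∈ Θ, ∀ C, Grows θ r (UnionQ q r) C → Grows θ p q C := by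
    rintro θ hθ C ⟨⟨i, rfl⟩, hne, hneq⟩
    have hθinf : ℵ₀ ≤ θ := (hΘ hθ).1.aleph0_le
    obtain ⟨x, hxu, hxr'⟩ := Set.exists_of_ssubset
      (ssubset_of_subset_of_ne (Set.inter_subset_inter_right _ hdr_u) hneq)
    have hxC : x ∈ Cls θ i := hxu.1
    have hxnr : x ∉ Dom r := fun h => hxr' ⟨hxC, h⟩
    have hxq : x ∈ Dom q := by
      have h2 := hxu.2
      rw [dom_u] at h2
      rcases h2 with h | h
      · exact h
      · exact absurd h hxnr
    have hxnp : x ∉ Dom p := fun h => hxnr (hdpr h)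
    obtain ⟨z, hzx, hzp⟩ := key_q x ⟨x, mem_cls_self κ x, hxq⟩
    rcases le_total θ κ with hle | hle
    · obtain ⟨w, hwC, hwr⟩ := hne
      have hClsEq : Cls κ x = Cls κ i := cls_eq_of_mem (cls_subset_cls hκinf hle i hxC)
      have hwx : w ∈ Cls κ x := by rw [hClsEq]; exact cls_subset_cls hκinf hle i hwC
      have hkr := key_r x ⟨z, hzx, hzp⟩
      have hwp : w ∈ Dom p := by
        have hmem : w ∈ Cls κ x ∩ Dom p := by rw [← hkr]; exact ⟨hwx, hwr⟩
        exact hmem.2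
      refine ⟨⟨i, rfl⟩, ⟨w, hwC, hwp⟩, fun hEq => ?_⟩
      have hmem : x ∈ Cls θ i ∩ Dom p := by rw [hEq]; exact ⟨hxC, hxq⟩
      exact hxnp hmem.2
    · have hzθ : z ∈ Cls θ i := by
        have h1 : z ∈ Cls θ x := cls_subset_cls hθinf hle x hzx
        rwa [cls_eq_of_mem hxC] at h1
      refine ⟨⟨i, rfl⟩, ⟨z, hzθ, hzp⟩, fun hEq => ?_⟩
      have hmem : x ∈ Cls θ i ∩ Dom p := by rw [hEq]; exact ⟨hxC, hxq⟩
      exact hxnp hmem.2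
  have qle_q : QLe Θ d q (UnionQ q r) := by
    refine ⟨hu_q, fun θ hθ => ?_⟩
    exact lt_of_le_of_lt
      (Cardinal.mk_le_mk_of_subset fun C hC => grow_q θ hθ C hC) (hpr_cnt θ hθ)
  have qle_r : QLe Θ d r (UnionQ q r) := by
    refine ⟨hu_r, fun θ hθ => ?_⟩
    exact lt_of_le_of_lt
      (Cardinal.mk_le_mk_of_subset fun C hC => grow_r θ hθ C hC) (hpq_cnt θ hθ)
  have inq : InQ μ Θ d (UnionQ q r) := by
    constructor
    · intro i hi
      by_cases h : q i = none
      · refine hr.1 i fun h' => hi ?_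
        simp [UnionQ, h, h']
      · exact hq.1 i h
    · intro θ hθ i hi
      have hdist : Cls θ i ∩ Dom (UnionQ q r) = (Cls θ i ∩ Dom q) ∪ (Cls θ i ∩ Dom r) := by
        rw [dom_u, Set.inter_union_distrib_left]
      rw [hdist]
      exact lt_of_le_of_lt (Cardinal.mk_union_le _ _)
        (Cardinal.add_lt_of_lt (aleph0_le_lift.mpr (hd θ hθ).1.aleph0_le)
          (hq.2 θ hθ i hi) (hr.2 θ hθ i hi))
  have lub : ∀ t, InQ μ Θ d t → QLe Θ d q t → QLe Θ d r t → QLe Θ d (UnionQ q r) t := by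
    rintro t _ ⟨hqt_sub, hqt_cnt⟩ ⟨hrt_sub, hrt_cnt⟩
    have hdqt : Dom q ⊆ Dom t := by
      intro j hj
      have : t j = q j := hqt_sub j hj
      simp only [Dom, Set.mem_setOf_eq] at hj ⊢
      rw [this]; exact hj
    have hdrt : Dom r ⊆ Dom t := by
      intro j hj
      have : t j = r j := hrt_sub j hj
      simp only [Dom, Set.mem_setOf_eq] at hj ⊢
      rw [this]; exact hj
    have hdut : Dom (UnionQ q r) ⊆ Dom t := by
      rw [dom_u]; exact Set.union_subset hdqt hdrt
    constructor
    · intro i hi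
      cases h : q i with
      | some b =>
        rw [hu_q i (by simp [h])]
        exact hqt_sub i (by simp [h])
      | none =>
        have hri : r i ≠ none := by
          intro h'
          exact hi (by simp [UnionQ, h, h'])
        rw [hu_r i hri]
        exact hrt_sub i hri
    · intro θ hθ
      have hsub : {C : Set Ordinal.{0} | Grows θ (UnionQ q r) t C} ⊆
          {C : Set Ordinal.{0} | Grows θ q t C} ∪ {C : Set Ordinal.{0} | Grows θ r t C} := by
        rintro C ⟨⟨i, rfl⟩, hne, hneq⟩
        obtain ⟨z, hzt, hznu⟩ := Set.exists_of_ssubset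
          (ssubset_of_subset_of_ne (Set.inter_subset_inter_right _ hdut) hneq)
        have hzC : z ∈ Cls θ i := hzt.1
        have hznU : z ∉ Dom (UnionQ q r) := fun h => hznu ⟨hzC, h⟩
        have hznq : z ∉ Dom q := fun h => hznU (hdq_u h)
        have hznr : z ∉ Dom r := fun h => hznU (hdr_u h)
        obtain ⟨w, hwC, hwu⟩ := hne
        rw [dom_u] at hwu
        rcases hwu with h | h
        · left
          refine ⟨⟨i, rfl⟩, ⟨w, hwC, h⟩, fun hEq => ?_⟩
          have : z ∈ Cls θ i ∩ Dom q := by rw [hEq]; exact hzt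
          exact hznq this.2
        · right
          refine ⟨⟨i, rfl⟩, ⟨w, hwC, h⟩, fun hEq => ?_⟩
          have : z ∈ Cls θ i ∩ Dom r := by rw [hEq]; exact hzt
          exact hznr this.2
      exact lt_of_le_of_lt
        ((Cardinal.mk_le_mk_of_subset hsub).trans (Cardinal.mk_union_le _ _))
        (Cardinal.add_lt_of_lt (aleph0_le_lift.mpr (hd θ hθ).1.aleph0_le)
          (hqt_cnt θ hθ) (hrt_cnt θ hθ))
  have nogrow : ∀ C : Set Ordinal.{0}, ¬ Grows κ q (UnionQ q r) C := by
    rintro C ⟨⟨i, rfl⟩, hne, hneq⟩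
    obtain ⟨y, hyu, hyq'⟩ := Set.exists_of_ssubset
      (ssubset_of_subset_of_ne (Set.inter_subset_inter_right _ hdq_u) hneq)
    have hyC : y ∈ Cls κ i := hyu.1
    have hynq : y ∉ Dom q := fun h => hyq' ⟨hyC, h⟩
    have hyr : y ∈ Dom r := by
      have h2 := hyu.2
      rw [dom_u] at h2
      rcases h2 with h | h
      · exact absurd h hynq
      · exact h
    have hkr := key_r i (key_q i hne)
    have hmem : y ∈ Cls κ i ∩ Dom p := by rw [← hkr]; exact ⟨hyC, hyr⟩
    exact hynq (hdpq hmem.2)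
  have apu : ∀ i : Ordinal.{0},
      (Cls κ i ∩ Dom r).Nonempty ↔ (Cls κ i ∩ Dom (UnionQ q r)).Nonempty := by
    intro i
    constructor
    · rintro ⟨w, hwC, hwr⟩
      exact ⟨w, hwC, hdr_u hwr⟩
    · rintro ⟨w, hwC, hwu⟩
      rw [dom_u] at hwu
      rcases hwu with h | h
      · have hpne := key_q i ⟨w, hwC, h⟩
        have hkr := key_r i hpne
        obtain ⟨z, hz⟩ := hpne
        rw [← hkr] at hz
        exact ⟨z, hz⟩
      · exact ⟨w, hwC, h⟩
  exact ⟨compat, inq, qle_q, qle_r, lub, ⟨qle_q, nogrow⟩, ⟨qle_r, apu⟩⟩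
end
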